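/- arXiv:2311.16566 — 5 statements merged into one kernel-verified Lean document; each statement's English description precedes it below -/
import Mathlib

section
/- Let n ≥ 1 be an integer, let ε ∈ (0, 1/2], and let k ≥ 2 be an even integer. Suppose f : F_2^n → F_2 is ε-far from linear. Then the number of k-tuples (x_1, …, x_k) ∈ (F_2^n)^k such that f(x_1 + ⋯ + x_k) ≠ f(x_1) + ⋯ + f(x_k) is at least ((1 − (1 − 2ε)^{k−1})/2) · 2^{nk}, and consequently at least min{1/4, kε/2} · 2^{nk}. -/
open Finset
namespace BLRaux

noncomputable def e (b : ZMod 2) : ℝ := if b = 0 then 1 else -1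
lemma e_zero : e 0 = 1 := by simp [e]
lemma e_add (a b : ZMod 2) : e (a + b) = e a * e b := by
  have h : ∀ b : ZMod 2, b = 0 ∨ b = 1 := by decide
  rcases h a with rfl | rfl <;> rcases h b with rfl | rfl <;>
    simp [e, show (1:ZMod 2) + 1 = 0 from by decide, show (1:ZMod 2) ≠ 0 from by decide]
lemma e_sum {ι : Type*} (s : Finset ι) (c : ι → ZMod 2) :
    e (∑ i ∈ s, c i) = ∏ i ∈ s, e (c i) := by
  induction s using Finset.cons_induction with
  | empty => simp [e_zero]
  | cons i s hi ih => rw [Finset.sum_cons, Finset.prod_cons, e_add, ih]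

lemma zmod2_add_eq_zero (a b : ZMod 2) : a + b = 0 ↔ a = b := by revert a b; decide

lemma sum_e {ι : Type*} [Fintype ι] [DecidableEq ι] (h : ι → ZMod 2) :
    ∑ t, e (h t) = (Fintype.card ι : ℝ)
      - 2 * ((Finset.univ.filter fun t => h t ≠ 0).card : ℝ) := by
  classical
  rw [← Finset.sum_filter_add_sum_filter_not Finset.univ (fun t => h t = 0)]
  have h1 : ∀ t ∈ Finset.univ.filter (fun t => h t = 0), e (h t) = 1 := by
    intro t ht
    simp only [Finset.mem_filter] at ht
    simp [e, ht.2]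
  have h2 : ∀ t ∈ Finset.univ.filter (fun t => ¬ h t = 0), e (h t) = -1 := by
    intro t ht
    simp only [Finset.mem_filter] at ht
    simp [e, ht.2]
  rw [Finset.sum_congr rfl h1, Finset.sum_congr rfl h2]
  have hc := Finset.card_filter_add_card_filter_not (s := (Finset.univ : Finset ι))
    (p := fun t => h t = 0)
  simp only [Finset.sum_const, nsmul_eq_mul, mul_one, mul_neg_one, Finset.card_univ] at *
  have hcc : ((Finset.univ.filter (fun t => h t = 0)).card : ℝ)
      + ((Finset.univ.filter (fun t => ¬ h t = 0)).card : ℝ) = (Fintype.card ι : ℝ) := by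
    exact_mod_cast congrArg (Nat.cast (R := ℝ)) hc
  push_neg
  linarith [hcc]

lemma sum_b (v : ZMod 2) : ∑ b : ZMod 2, e (b * v) = 1 + e v := by
  have : (Finset.univ : Finset (ZMod 2)) = {0, 1} := by decide
  rw [this, Finset.sum_insert (by decide), Finset.sum_singleton, zero_mul, one_mul, e_zero]

lemma orth (n : ℕ) (x : Fin n → ZMod 2) :
    ∑ a : Fin n → ZMod 2, e (∑ i, a i * x i) = if x = 0 then (2:ℝ)^n else 0 := by
  have h1 : ∀ a : Fin n → ZMod 2, e (∑ i, a i * x i) = ∏ i, e (a i * x i) :=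
    fun a => e_sum _ _
  simp_rw [h1]
  rw [← Fintype.prod_sum (fun i b => e (b * x i))]
  simp_rw [sum_b]
  by_cases hx : x = 0
  · simp [hx, e_zero, one_add_one_eq_two]
  · rw [if_neg hx]
    obtain ⟨i, hi⟩ : ∃ i, x i ≠ 0 := by
      by_contra h; push_neg at h; exact hx (funext h)
    apply Finset.prod_eq_zero (Finset.mem_univ i)
    have hx1 : x i = 1 := by
      have : ∀ b : ZMod 2, b ≠ 0 → b = 1 := by decide
      exact this _ hi
    simp [hx1, e]

end BLRaux
namespace BLRaux

lemma expand (n m : ℕ) (F : (Fin n → ZMod 2) → ℝ) :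
    ∑ a : Fin n → ZMod 2, (∑ x : Fin n → ZMod 2, F x * e (∑ i, a i * x i)) ^ m
    = 2^n * ∑ y : Fin m → (Fin n → ZMod 2),
        (∏ j, F (y j)) * (if (∑ j, y j) = 0 then 1 else 0) := by
  simp_rw [Fintype.sum_pow]
  rw [Finset.sum_comm, Finset.mul_sum]
  apply Finset.sum_congr rfl
  intro y _
  have h1 : ∀ a : Fin n → ZMod 2, (∏ j, (F (y j) * e (∑ i, a i * (y j) i)))
      = (∏ j, F (y j)) * e (∑ i, a i * (∑ j, y j) i) := by
    intro a
    rw [Finset.prod_mul_distrib]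
    congr 1
    rw [← e_sum]
    congr 1
    rw [Finset.sum_comm]
    apply Finset.sum_congr rfl
    intro i _
    rw [Finset.sum_apply, Finset.mul_sum]
  simp_rw [h1]
  rw [← Finset.mul_sum, orth]
  split_ifs <;> ring

lemma collapse (n m : ℕ) (F : (Fin n → ZMod 2) → ℝ) :
    ∑ y : Fin (m+1) → (Fin n → ZMod 2),
        (∏ j, F (y j)) * (if (∑ j, y j) = 0 then 1 else 0)
    = ∑ x : Fin m → (Fin n → ZMod 2), F (∑ i, x i) * ∏ i, F (x i) := by
  rw [← Equiv.sum_comp (Fin.consEquiv (fun _ : Fin (m+1) => (Fin n → ZMod 2)))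
    (fun y => (∏ j, F (y j)) * (if (∑ j, y j) = 0 then 1 else 0))]
  rw [Fintype.sum_prod_type]
  have hc : ∀ (z : Fin n → ZMod 2) (x : Fin m → (Fin n → ZMod 2)),
      (Fin.consEquiv (fun _ : Fin (m+1) => (Fin n → ZMod 2))) (z, x) = Fin.cons z x := by
    intro z x; rfl
  simp only [hc, Fin.prod_univ_succ, Fin.sum_univ_succ, Fin.cons_zero, Fin.cons_succ]
  rw [Finset.sum_comm]
  apply Finset.sum_congr rfl
  intro x _
  have key : ∀ z : Fin n → ZMod 2, (z + ∑ i, x i = 0) ↔ (z = ∑ i, x i) := by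
    intro z
    constructor
    · intro h
      funext i
      have := congrFun h i
      have h2 := (zmod2_add_eq_zero (z i) ((∑ j, x j) i)).mp (by simpa using this)
      simpa using h2
    · intro h
      subst h
      funext i
      simpa using (zmod2_add_eq_zero ((∑ j, x j) i) ((∑ j, x j) i)).mpr rfl
  simp_rw [key, mul_ite, mul_one, mul_zero, Finset.sum_ite_eq' Finset.univ]
  simp

end BLRaux

namespace BLRaux

lemma e_mul_self' (b : ZMod 2) : (if b = 0 then (1:ℝ) else -1) * (if b = 0 then (1:ℝ) else -1) = 1 := by
  split_ifs <;> norm_num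

lemma minbound (ε : ℝ) (hε : 0 < ε) (hε' : ε ≤ 1/2) (k : ℕ) (hk : 2 ≤ k) :
    min (1/4) (k * ε / 2) ≤ (1 - (1 - 2*ε)^(k-1)) / 2 := by
  set t : ℝ := 1 - 2*ε with ht
  have ht0 : 0 ≤ t := by simp [ht]; linarith
  by_cases hcase : t^(k-1) ≤ 1/2
  · calc min (1/4) (k * ε / 2) ≤ 1/4 := min_le_left _ _
      _ ≤ (1 - t^(k-1))/2 := by linarith
  · push_neg at hcase
    have hgeom : (∑ j ∈ Finset.range (k-1), t^j) * (1 - t) = 1 - t^(k-1) := by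
      have := geom_sum_mul t (k-1)
      linarith [this]
    have hsum : (k:ℝ)/2 ≤ ∑ j ∈ Finset.range (k-1), t^j := by
      have hk1 : k - 1 = (k-2) + 1 := by omega
      rw [hk1, Finset.sum_range_succ']
      have hterm : ∀ j ∈ Finset.range (k-2), (1:ℝ)/2 ≤ t^(j+1) := by
        intro j hj
        simp only [Finset.mem_range] at hj
        have : t^(k-1) ≤ t^(j+1) := by
          apply pow_le_pow_of_le_one ht0 (by linarith) (by omega)
        linarith
      have := Finset.sum_le_sum hterm
      simp only [Finset.sum_const, Finset.card_range, nsmul_eq_mul] at this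
      have hc : ((k-2 : ℕ) : ℝ) = (k:ℝ) - 2 := by
        rw [Nat.cast_sub hk]; norm_num
      rw [hc] at this
      simp only [pow_zero]
      linarith
    have h1t : 1 - t = 2*ε := by rw [ht]; ring
    have : (k:ℝ) * ε ≤ 1 - t^(k-1) := by
      rw [← hgeom, h1t]
      have h2 : (k:ℝ)/2 * (2*ε) ≤ (∑ j ∈ Finset.range (k-1), t^j) * (2*ε) := by
        apply mul_le_mul_of_nonneg_right hsum (by linarith)
      calc (k:ℝ) * ε = (k:ℝ)/2 * (2*ε) := by ring
        _ ≤ _ := h2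
    calc min (1/4) (k * ε / 2) ≤ k * ε / 2 := min_le_right _ _
      _ ≤ (1 - t^(k-1))/2 := by linarith

end BLRaux

namespace BLRaux

lemma e_mul_self (b : ZMod 2) : e b * e b = 1 := by
  unfold e; split_ifs <;> norm_num

lemma key_identity (n m : ℕ) (F : (Fin n → ZMod 2) → ℝ) :
    ∑ a : Fin n → ZMod 2, (∑ x : Fin n → ZMod 2, F x * e (∑ i, a i * x i)) ^ (m+1)
    = 2^n * ∑ x : Fin m → (Fin n → ZMod 2), F (∑ i, x i) * ∏ i, F (x i) := by
  rw [expand, collapse]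

lemma key_identity' (n m p : ℕ) (hp : p = m + 1) (F : (Fin n → ZMod 2) → ℝ) :
    ∑ a : Fin n → ZMod 2, (∑ x : Fin n → ZMod 2, F x * e (∑ i, a i * x i)) ^ p
    = 2^n * ∑ x : Fin m → (Fin n → ZMod 2), F (∑ i, x i) * ∏ i, F (x i) := by
  subst hp; exact key_identity n m F

end BLRaux

theorem stmt_0 (n : ℕ) (hn : 1 ≤ n) (ε : ℝ) (hε : 0 < ε) (hε' : ε ≤ 1 / 2)
    (k : ℕ) (hk : 2 ≤ k) (hkeven : Even k)
    (f : (Fin n → ZMod 2) → ZMod 2)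
    (hfar : ∀ g : (Fin n → ZMod 2) → ZMod 2, (∀ x y, g (x + y) = g x + g y) →
      ε * 2 ^ n ≤ ((Finset.univ.filter (fun x => f x ≠ g x)).card : ℝ)) :
    (1 - (1 - 2 * ε) ^ (k - 1)) / 2 * 2 ^ (n * k) ≤
      ((Finset.univ.filter (fun x : Fin k → Fin n → ZMod 2 =>
        f (∑ i, x i) ≠ ∑ i, f (x i))).card : ℝ) ∧
    min (1 / 4) (k * ε / 2) * 2 ^ (n * k) ≤
      ((Finset.univ.filter (fun x : Fin k → Fin n → ZMod 2 =>
        f (∑ i, x i) ≠ ∑ i, f (x i))).card : ℝ) := by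
  have cardG : ((Fintype.card (Fin n → ZMod 2)) : ℝ) = 2^n := by
    simp [Fintype.card_fun]
  have cardGk : ((Fintype.card (Fin k → Fin n → ZMod 2)) : ℝ) = 2^(n*k) := by
    simp [Fintype.card_fun, pow_mul]
  set F : (Fin n → ZMod 2) → ℝ := fun x => BLRaux.e (f x) with hF
  set W : (Fin n → ZMod 2) → ℝ := fun a => ∑ x, F x * BLRaux.e (∑ i, a i * x i) with hWdef
  -- Fourier coefficient bound
  have hW : ∀ a, W a ≤ (1 - 2*ε) * 2^n := by
    intro a
    have hlin : ∀ x y : Fin n → ZMod 2,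
        (fun x => ∑ i, a i * x i) (x + y) =
        (fun x => ∑ i, a i * x i) x + (fun x => ∑ i, a i * x i) y := by
      intro x y
      simp [Pi.add_apply, mul_add, Finset.sum_add_distrib]
    have hfar' := hfar (fun x => ∑ i, a i * x i) hlin
    have hWa : W a = ∑ x, BLRaux.e (f x + ∑ i, a i * x i) :=
      Finset.sum_congr rfl (fun x _ => (BLRaux.e_add _ _).symm)
    rw [hWa, BLRaux.sum_e]
    have hfe : (Finset.univ.filter fun x => f x + (∑ i, a i * x i) ≠ 0)
        = (Finset.univ.filter fun x => f x ≠ (fun x => ∑ i, a i * x i) x) := by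
      apply Finset.filter_congr
      intro x _
      simp only [ne_eq, BLRaux.zmod2_add_eq_zero]
    rw [hfe, cardG]
    linarith
  -- Parseval
  have parseval : ∑ a, (W a)^2 = (2:ℝ)^n * 2^n := by
    have h := BLRaux.key_identity' n 1 2 (by norm_num) F
    have h2 : ∑ x : Fin 1 → (Fin n → ZMod 2), F (∑ i, x i) * ∏ i, F (x i) = (2:ℝ)^n := by
      rw [← Equiv.sum_comp (Equiv.funUnique (Fin 1) (Fin n → ZMod 2)).symm]
      have : ∀ z : Fin n → ZMod 2,
          F (∑ i, ((Equiv.funUnique (Fin 1) (Fin n → ZMod 2)).symm z) i)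
          * ∏ i, F (((Equiv.funUnique (Fin 1) (Fin n → ZMod 2)).symm z) i) = 1 := by
        intro z
        simp [Fin.sum_univ_one, Fin.prod_univ_one, hF, BLRaux.e_mul_self]
      rw [Finset.sum_congr rfl (fun z _ => this z)]
      simp [cardG]
    rw [h2] at h
    exact h
  -- main identity
  set T : ℝ := ∑ x : Fin k → (Fin n → ZMod 2), F (∑ i, x i) * ∏ i, F (x i) with hT
  have hkey : ∑ a, (W a)^(k+1) = 2^n * T := BLRaux.key_identity' n k (k+1) rfl F
  -- bound each term
  have hOdd : Odd (k-1) := Nat.Even.sub_odd (by omega) hkeven odd_one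
  have hbound : ∀ a, (W a)^(k+1) ≤ (W a)^2 * ((1-2*ε)*2^n)^(k-1) := by
    intro a
    have h1 : (W a)^(k-1) ≤ ((1-2*ε)*2^n)^(k-1) := by
      have := (Odd.strictMono_pow (R := ℝ) hOdd).monotone (hW a)
      simpa using this
    calc (W a)^(k+1) = (W a)^2 * (W a)^(k-1) := by
          rw [← pow_add]; congr 1; omega
      _ ≤ (W a)^2 * ((1-2*ε)*2^n)^(k-1) :=
          mul_le_mul_of_nonneg_left h1 (sq_nonneg _)
  have hsum : (2:ℝ)^n * T ≤ ((2:ℝ)^n * 2^n) * ((1-2*ε)*2^n)^(k-1) := by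
    rw [← hkey, ← parseval, Finset.sum_mul]
    exact Finset.sum_le_sum (fun a _ => hbound a)
  -- hence T ≤ (1-2ε)^(k-1) * 2^(n*k)
  have hTbound : T ≤ (1-2*ε)^(k-1) * 2^(n*k) := by
    have h2n : (0:ℝ) < 2^n := by positivity
    have hexp : (2:ℝ)^n * ((2:ℝ)^n)^(k-1) = (2:ℝ)^(n*k) := by
      rw [← pow_mul, ← pow_add]
      congr 1
      obtain ⟨c, rfl⟩ : ∃ c, k = c + 1 := ⟨k-1, by omega⟩
      rw [Nat.add_sub_cancel]
      ring
    have hthis := hsum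
    rw [mul_pow] at hthis
    have h4 : (2:ℝ)^n * T ≤ 2^n * ((1-2*ε)^(k-1) * ((2:ℝ)^n * ((2:ℝ)^n)^(k-1))) := by
      rw [show (2:ℝ)^n * ((1-2*ε)^(k-1) * ((2:ℝ)^n * ((2:ℝ)^n)^(k-1)))
          = 2^n * 2^n * ((1-2*ε)^(k-1) * ((2:ℝ)^n)^(k-1)) from by ring]
      exact hthis
    have h5 := le_of_mul_le_mul_left h4 h2n
    rw [hexp] at h5
    exact h5
  -- T in terms of the rejection count
  set B : ℝ := ((Finset.univ.filter (fun x : Fin k → Fin n → ZMod 2 =>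
        f (∑ i, x i) ≠ ∑ i, f (x i))).card : ℝ) with hB
  have hTB : T = 2^(n*k) - 2 * B := by
    have h1 : T = ∑ x : Fin k → (Fin n → ZMod 2),
        BLRaux.e (f (∑ i, x i) + ∑ i, f (x i)) := by
      apply Finset.sum_congr rfl
      intro x _
      rw [BLRaux.e_add]
      congr 1
      simp only [hF]
      exact (BLRaux.e_sum Finset.univ (fun i => f (x i))).symm
    rw [h1, BLRaux.sum_e, cardGk]
    have hfe : (Finset.univ.filter fun x : Fin k → Fin n → ZMod 2 =>
          f (∑ i, x i) + (∑ i, f (x i)) ≠ 0)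
        = (Finset.univ.filter fun x : Fin k → Fin n → ZMod 2 =>
          f (∑ i, x i) ≠ ∑ i, f (x i)) := by
      apply Finset.filter_congr
      intro x _
      simp only [ne_eq, BLRaux.zmod2_add_eq_zero]
    rw [hfe]
  have goal1 : (1 - (1 - 2 * ε) ^ (k - 1)) / 2 * 2 ^ (n * k) ≤ B := by
    have h2nk : (0:ℝ) < 2^(n*k) := by positivity
    nlinarith [hTbound, hTB]
  refine ⟨goal1, ?_⟩
  calc min (1 / 4) ((k:ℝ) * ε / 2) * 2 ^ (n * k)
      ≤ (1 - (1 - 2 * ε) ^ (k - 1)) / 2 * 2 ^ (n * k) := by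
        apply mul_le_mul_of_nonneg_right (BLRaux.minbound ε hε hε' k hk) (by positivity)
    _ ≤ B := goal1
end

section
/- Fix integers d ≥ 1, n ≥ 1, and k ≥ 1, and let y_1, …, y_k ∈ F_2^n. Let Z = {x ∈ F_2^n : ext_d(x) lies in the F_2-linear span of ext_d(y_1), …, ext_d(y_k)}, and let r = |Z| (note r ≥ 1 since each y_i ∈ Z). Then the binomial coefficient C(⌊log_2 r⌋, d) is at most k. -/
open scoped Classical

/-- The extension `ext_d(x)` of a vector `x ∈ F₂ⁿ`: the vector indexed by sets
`S ⊆ [n]` with `|S| ≤ d` whose `S`-entry is the monomial `∏_{i ∈ S} x_i`. -/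
def extVec (n d : ℕ) (x : Fin n → ZMod 2) :
    {S : Finset (Fin n) // S.card ≤ d} → ZMod 2 :=
  fun S => ∏ i ∈ S.1, x i

namespace Stmt4Aux

open Finset Submodule Module

variable {n : ℕ}

/-- The monomial `x ↦ ∏_{i ∈ S} x i` as a function on the points of `Z`. -/
def mon (Z : Finset (Fin n → ZMod 2)) (S : Finset (Fin n)) : ↥Z → ZMod 2 :=
  fun x => ∏ i ∈ S, (x : Fin n → ZMod 2) i

/-- Binary weight of a set of indices. -/
def wt (S : Finset (Fin n)) : ℕ := ∑ i ∈ S, 2 ^ (i : ℕ)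

lemma wt_inj : Function.Injective (wt (n := n)) := by
  intro S T h
  have key : ∀ U : Finset (Fin n),
      wt U = ∑ i ∈ U.map ⟨Fin.val, Fin.val_injective⟩, 2 ^ i := by
    intro U; rw [Finset.sum_map]; rfl
  rw [key S, key T] at h
  exact Finset.map_injective _ (Finset.geomSum_injective le_rfl h)

lemma wt_union_le (S T : Finset (Fin n)) : wt (S ∪ T) ≤ wt S + wt T := by
  have := Finset.sum_union_inter (s₁ := S) (s₂ := T) (f := fun i : Fin n => 2 ^ (i : ℕ))
  unfold wt; omega

lemma wt_union_disjoint {S T : Finset (Fin n)} (h : Disjoint S T) :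
    wt (S ∪ T) = wt S + wt T := Finset.sum_union h

lemma wt_union_lt {T S R : Finset (Fin n)} (h : wt T < wt S) (hd : Disjoint S R) :
    wt (T ∪ R) < wt (S ∪ R) := by
  have h1 := wt_union_le T R
  have h2 := wt_union_disjoint hd
  omega

lemma zmod2_mul_self : ∀ a : ZMod 2, a * a = a := by decide

lemma zmod2_aux1 : ∀ v : ZMod 2, v + (v + 1) = 1 := by decide

lemma zmod2_aux2 : ∀ u v : ZMod 2, u ≠ v → v + (u + 1) = 0 := by decide

lemma mon_mul (Z : Finset (Fin n → ZMod 2)) (T R : Finset (Fin n)) :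
    mon Z T * mon Z R = mon Z (T ∪ R) := by
  funext x
  show (∏ i ∈ T, (x : Fin n → ZMod 2) i) * ∏ i ∈ R, (x : Fin n → ZMod 2) i
      = ∏ i ∈ T ∪ R, (x : Fin n → ZMod 2) i
  rw [← Finset.prod_union_inter]
  conv_rhs => rw [← Finset.prod_sdiff (Finset.inter_subset_union (s := T) (t := R))]
  rw [← Finset.prod_sdiff (Finset.inter_subset_union (s := T) (t := R)), mul_assoc,
    zmod2_mul_self _]

/-- The greedy set of "standard monomials" on `Z`. -/
noncomputable def Dset (Z : Finset (Fin n → ZMod 2)) : Finset (Finset (Fin n)) :=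
  Finset.univ.filter
    (fun S => mon Z S ∉ span (ZMod 2) (mon Z '' {T | wt T < wt S}))

lemma mem_Dset {Z : Finset (Fin n → ZMod 2)} {S : Finset (Fin n)} :
    S ∈ Dset Z ↔ mon Z S ∉ span (ZMod 2) (mon Z '' {T | wt T < wt S}) := by
  simp [Dset]

lemma Dset_downclosed (Z : Finset (Fin n → ZMod 2)) :
    ∀ S ∈ Dset Z, ∀ S' ⊆ S, S' ∈ Dset Z := by
  intro S hS S' hsub
  by_contra h
  rw [mem_Dset, not_not] at h
  set R := S \ S' with hR
  have hdisj : Disjoint S' R := Finset.disjoint_sdiff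
  have hUnion : S' ∪ R = S := by
    rw [hR, Finset.union_comm]
    exact Finset.sdiff_union_of_subset hsub
  apply mem_Dset.mp hS
  have hmap := Submodule.mem_map_of_mem (f := LinearMap.mulLeft (ZMod 2) (mon Z R)) h
  rw [Submodule.map_span] at hmap
  have hval : (LinearMap.mulLeft (ZMod 2) (mon Z R)) (mon Z S') = mon Z S := by
    rw [LinearMap.mulLeft_apply, mon_mul, Finset.union_comm, hUnion]
  rw [hval] at hmap
  refine Submodule.span_le.2 ?_ hmap
  rintro v ⟨w, ⟨T, hT, rfl⟩, rfl⟩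
  refine Submodule.subset_span ⟨T ∪ R, ?_, ?_⟩
  · show wt (T ∪ R) < wt S
    rw [← hUnion]
    exact wt_union_lt hT hdisj
  · rw [LinearMap.mulLeft_apply, mon_mul, Finset.union_comm]

lemma mon_mem_span_Dset (Z : Finset (Fin n → ZMod 2)) (S : Finset (Fin n)) :
    mon Z S ∈ span (ZMod 2) (mon Z '' ↑(Dset Z)) := by
  suffices H : ∀ N S, wt S ≤ N → mon Z S ∈ span (ZMod 2) (mon Z '' ↑(Dset Z)) from
    H (wt S) S le_rfl
  intro N
  induction N using Nat.strong_induction_on with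
  | _ N ih =>
    intro S hS
    by_cases hSD : S ∈ Dset Z
    · exact Submodule.subset_span ⟨S, by simpa using hSD, rfl⟩
    · rw [mem_Dset, not_not] at hSD
      refine Submodule.span_le.2 ?_ hSD
      rintro v ⟨T, hT, rfl⟩
      exact ih (wt T) (lt_of_lt_of_le hT hS) T le_rfl

lemma span_Dset_top (Z : Finset (Fin n → ZMod 2)) :
    span (ZMod 2) (mon Z '' ↑(Dset Z)) = ⊤ := by
  rw [eq_top_iff]
  have hdelta : ∀ a : ↥Z, (fun x : ↥Z => if a = x then (1 : ZMod 2) else 0)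
      ∈ span (ZMod 2) (Set.range (mon Z)) := by
    intro a
    have hfun : (fun x : ↥Z => if a = x then (1 : ZMod 2) else 0)
        = ∑ t ∈ (Finset.univ : Finset (Fin n)).powerset,
            (∏ i ∈ Finset.univ \ t, ((a : Fin n → ZMod 2) i + 1)) • mon Z t := by
      funext x
      have hprod : (if a = x then (1 : ZMod 2) else 0)
          = ∏ i ∈ (Finset.univ : Finset (Fin n)),
              ((x : Fin n → ZMod 2) i + ((a : Fin n → ZMod 2) i + 1)) := by
        by_cases h : a = x
        · subst h
          rw [if_pos rfl]
          exact (Finset.prod_eq_one fun i _ => zmod2_aux1 _).symm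
        · rw [if_neg h]
          have hex : ∃ i, (a : Fin n → ZMod 2) i ≠ (x : Fin n → ZMod 2) i := by
            by_contra hc
            push_neg at hc
            exact h (Subtype.ext (funext hc))
          obtain ⟨i, hi⟩ := hex
          exact (Finset.prod_eq_zero (Finset.mem_univ i) (zmod2_aux2 _ _ hi)).symm
      rw [hprod, Finset.prod_add, Finset.sum_apply]
      refine Finset.sum_congr rfl ?_
      intro t _
      simp only [Pi.smul_apply, smul_eq_mul]
      rw [mul_comm]
      rfl
    rw [hfun]
    exact Submodule.sum_mem _ fun t _ =>
      Submodule.smul_mem _ _ (Submodule.subset_span ⟨t, rfl⟩)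
  intro f _
  have hf : f ∈ span (ZMod 2) (Set.range (mon Z)) := by
    rw [pi_eq_sum_univ f]
    exact Submodule.sum_mem _ fun a _ => Submodule.smul_mem _ _ (hdelta a)
  refine Submodule.span_le.2 ?_ hf
  rintro v ⟨S, rfl⟩
  exact mon_mem_span_Dset Z S

lemma card_le_Dset (Z : Finset (Fin n → ZMod 2)) : Z.card ≤ (Dset Z).card := by
  have h1 : Z.card = finrank (ZMod 2) (↥Z → ZMod 2) := by
    rw [Module.finrank_pi, Fintype.card_coe]
  have h2 : (Set.range fun S : ↥(Dset Z) => mon Z S.1) = mon Z '' ↑(Dset Z) :=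
    (Set.image_eq_range _ _).symm
  have h3 := finrank_range_le_card (R := ZMod 2) (fun S : ↥(Dset Z) => mon Z S.1)
  rw [Set.finrank, h2, span_Dset_top, finrank_top, Fintype.card_coe] at h3
  omega

lemma greedy_linearIndependent {ι M : Type*} [AddCommGroup M] [Module (ZMod 2) M]
    (v : ι → M) (w : ι → ℕ) (hw : Function.Injective w)
    (h : ∀ i, v i ∉ span (ZMod 2) (v '' {j | w j < w i})) :
    LinearIndependent (ZMod 2) v := by
  rw [linearIndependent_iff']
  intro s g hsum i hi
  by_contra hgi
  have hne : (s.filter fun j => g j ≠ 0).Nonempty :=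
    ⟨i, Finset.mem_filter.2 ⟨hi, hgi⟩⟩
  obtain ⟨i₀, hi₀mem, hmax⟩ := Finset.exists_max_image _ w hne
  rw [Finset.mem_filter] at hi₀mem
  obtain ⟨hi₀s, hgi₀⟩ := hi₀mem
  apply h i₀
  have hchar : ∀ m : M, m + m = 0 := by
    intro m
    rw [← two_smul (ZMod 2) m, show (2 : ZMod 2) = 0 by decide, zero_smul]
  have hsum' : g i₀ • v i₀ + ∑ j ∈ s.erase i₀, g j • v j = 0 := by
    rw [Finset.add_sum_erase s (fun j => g j • v j) hi₀s]
    exact hsum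
  have hone : g i₀ = 1 := by
    have : ∀ a : ZMod 2, a ≠ 0 → a = 1 := by decide
    exact this _ hgi₀
  have hv : v i₀ = ∑ j ∈ s.erase i₀, g j • v j := by
    have := hchar (g i₀ • v i₀)
    have h' : g i₀ • v i₀ = ∑ j ∈ s.erase i₀, g j • v j := by
      have := congrArg (fun z => g i₀ • v i₀ + z) hsum'.symm
      simp only [add_zero] at this
      rw [this, ← add_assoc, hchar (g i₀ • v i₀), zero_add]
    rw [← h', hone, one_smul]
  rw [hv]
  refine Submodule.sum_mem _ fun j hj => ?_
  by_cases hgj : g j = 0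
  · rw [hgj, zero_smul]; exact Submodule.zero_mem _
  · refine Submodule.smul_mem _ _ (Submodule.subset_span ⟨j, ?_, rfl⟩)
    have hjs : j ∈ s := Finset.mem_of_mem_erase hj
    have hle := hmax j (Finset.mem_filter.2 ⟨hjs, hgj⟩)
    have hne' : w j ≠ w i₀ := fun hh => (Finset.ne_of_mem_erase hj) (hw hh)
    exact lt_of_le_of_ne hle hne'

/-- The key combinatorial lemma: a downward closed family of size at least `2 ^ m`
contains at least `m.choose d` sets of size at most `d`. -/
lemma downset_choose {m d : ℕ} (hd : 1 ≤ d) (hmn : m ≤ n)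
    (D : Finset (Finset (Fin n))) (hdown : ∀ S ∈ D, ∀ T ⊆ S, T ∈ D)
    (hcard : 2 ^ m ≤ D.card) :
    m.choose d ≤ (D.filter fun S => S.card ≤ d).card := by
  have hpos : 0 < D.card := lt_of_lt_of_le (by positivity) hcard
  obtain ⟨S₀, hS₀⟩ := Finset.card_pos.1 hpos
  have hempty : ∅ ∈ D := hdown S₀ hS₀ ∅ (Finset.empty_subset _)
  have hfilterpos : 0 < (D.filter fun S => S.card ≤ d).card :=
    Finset.card_pos.2 ⟨∅, Finset.mem_filter.2 ⟨hempty, by simp⟩⟩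
  rcases le_or_gt m d with hmd | hdm
  · rcases eq_or_lt_of_le hmd with heq | hlt
    · subst heq
      rw [Nat.choose_self]
      omega
    · rw [Nat.choose_eq_zero_of_lt hlt]
      exact Nat.zero_le _
  · -- main case : d < m
    by_contra hcon
    push_neg at hcon
    -- Step A : every set in `D` has size < m
    have hsize : ∀ S ∈ D, S.card < m := by
      intro S hS
      by_contra hc
      push_neg at hc
      have hsub : S.powersetCard d ⊆ D.filter fun T => T.card ≤ d := by
        intro T hT
        rw [Finset.mem_powersetCard] at hT
        exact Finset.mem_filter.2 ⟨hdown S hS T hT.1, le_of_eq hT.2⟩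
      have h1 := Finset.card_le_card hsub
      rw [Finset.card_powersetCard] at h1
      have h2 := Nat.choose_le_choose d hc
      omega
    -- Step B : Kruskal-Katona bound on each level above d
    have hlevel : ∀ j, d < j → (D.filter fun S => S.card = j).card ≤ m.choose j := by
      intro j hdj
      by_contra hc
      push_neg at hc
      have hjm : j < m := by
        obtain ⟨S, hS⟩ := Finset.card_pos.1 (lt_of_le_of_lt (Nat.zero_le _) hc)
        rw [Finset.mem_filter] at hS
        have := hsize S hS.1
        omega
      have hsized : (↑(D.filter fun S => S.card = j) : Set (Finset (Fin n))).Sized j := by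
        intro S hS
        exact (Finset.mem_filter.1 (Finset.mem_coe.1 hS)).2
      have hkk := Finset.kruskal_katona_lovasz_form (i := j - d)
        (Nat.sub_le _ _) (le_of_lt hjm) hmn hsized (le_of_lt hc)
      have hjd : j - (j - d) = d := by omega
      rw [hjd] at hkk
      have hss : (Finset.shadow^[j - d] (D.filter fun S => S.card = j)) ⊆
          D.filter (fun S => S.card ≤ d) := by
        intro B hB
        rw [Finset.mem_shadow_iterate_iff_exists_sdiff] at hB
        obtain ⟨A, hA, hBA, hcardAB⟩ := hB
        rw [Finset.mem_filter] at hA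
        obtain ⟨hAD, hAcard⟩ := hA
        have hBD := hdown A hAD B hBA
        have h2 := Finset.card_le_card hBA
        have h1 : (A \ B).card = A.card - B.card := Finset.card_sdiff_of_subset hBA
        refine Finset.mem_filter.2 ⟨hBD, ?_⟩
        omega
      have hss' := Finset.card_le_card hss
      have hkk' : m.choose d ≤ (Finset.shadow^[j - d] (D.filter fun S => S.card = j)).card := by
        convert hkk using 2
      omega
    -- counting
    have hfiber : D.card = ∑ j ∈ Finset.range m, (D.filter fun S => S.card = j).card := by
      apply Finset.card_eq_sum_card_fiberwise
      intro S hS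
      rw [Finset.mem_coe, Finset.mem_range]
      exact hsize S hS
    have hlow : (D.filter fun S => S.card ≤ d).card
        = ∑ j ∈ Finset.range (d + 1), (D.filter fun S => S.card = j).card := by
      have h0 : (D.filter fun S => S.card ≤ d).card
          = ∑ j ∈ Finset.range (d + 1),
              ((D.filter fun S => S.card ≤ d).filter fun S => S.card = j).card := by
        apply Finset.card_eq_sum_card_fiberwise
        intro S hS
        rw [Finset.mem_coe, Finset.mem_range]
        have := (Finset.mem_filter.1 hS).2
        omega
      rw [h0]
      refine Finset.sum_congr rfl ?_
      intro j hj
      rw [Finset.mem_range] at hj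
      congr 1
      ext S
      simp only [Finset.mem_filter]
      constructor
      · rintro ⟨⟨h1, _⟩, h3⟩
        exact ⟨h1, h3⟩
      · rintro ⟨h1, h3⟩
        exact ⟨⟨h1, by omega⟩, h3⟩
    have hsplit : ∑ j ∈ Finset.range m, (D.filter fun S => S.card = j).card
        = ∑ j ∈ Finset.range (d + 1), (D.filter fun S => S.card = j).card
          + ∑ j ∈ Finset.Ico (d + 1) m, (D.filter fun S => S.card = j).card := by
      simp only [Finset.range_eq_Ico]
      rw [Finset.sum_Ico_consecutive _ (by omega : 0 ≤ d + 1) (by omega : d + 1 ≤ m)]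
    have hB : ∑ j ∈ Finset.Ico (d + 1) m, (D.filter fun S => S.card = j).card
        ≤ ∑ j ∈ Finset.Ico (d + 1) m, m.choose j := by
      refine Finset.sum_le_sum ?_
      intro j hj
      rw [Finset.mem_Ico] at hj
      exact hlevel j (by omega)
    have hXC : m.choose d + ∑ j ∈ Finset.Ico (d + 1) m, m.choose j
        = ∑ j ∈ Finset.Ico d m, m.choose j := by
      rw [Finset.sum_eq_sum_Ico_succ_bot (by omega : d < m)]
    have hbound : ∑ j ∈ Finset.Ico d m, m.choose j + 2 ≤ 2 ^ m := by
      have hfull := Nat.sum_range_choose m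
      have hsplit2 : ∑ j ∈ Finset.range (m + 1), m.choose j
          = ∑ j ∈ Finset.range d, m.choose j
            + (∑ j ∈ Finset.Ico d m, m.choose j + m.choose m) := by
        simp only [Finset.range_eq_Ico]
        rw [← Finset.sum_Ico_consecutive _ (by omega : 0 ≤ d) (by omega : d ≤ m + 1)]
        congr 1
        rw [Finset.sum_Ico_succ_top (by omega : d ≤ m)]
      have hlow1 : 1 ≤ ∑ j ∈ Finset.range d, m.choose j := by
        have : m.choose 0 ≤ ∑ j ∈ Finset.range d, m.choose j :=
          Finset.single_le_sum (fun _ _ => Nat.zero_le _)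
            (Finset.mem_range.2 (by omega))
        simpa using this
      rw [Nat.choose_self] at hsplit2
      omega
    have hXd : 1 ≤ m.choose d := Nat.choose_pos (by omega)
    omega

end Stmt4Aux

theorem stmt_4 (d n k : ℕ) (hd : 1 ≤ d) (hn : 1 ≤ n) (hk : 1 ≤ k)
    (y : Fin k → Fin n → ZMod 2) :
    (Nat.log 2
      ((Finset.univ.filter (fun x : Fin n → ZMod 2 =>
        extVec n d x ∈
          Submodule.span (ZMod 2) (Set.range (fun i => extVec n d (y i))))).card)).choose d
      ≤ k := by
  classical
  set V := Submodule.span (ZMod 2) (Set.range fun i => extVec n d (y i)) with hV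
  set Z := Finset.univ.filter
      (fun x : Fin n → ZMod 2 => extVec n d x ∈ V) with hZdef
  set m := Nat.log 2 Z.card with hm
  show m.choose d ≤ k
  have hy0 : y ⟨0, hk⟩ ∈ Z :=
    Finset.mem_filter.2 ⟨Finset.mem_univ _, Submodule.subset_span ⟨⟨0, hk⟩, rfl⟩⟩
  have hrpos : 0 < Z.card := Finset.card_pos.2 ⟨_, hy0⟩
  have h2m : 2 ^ m ≤ Z.card := Nat.pow_log_le_self 2 hrpos.ne'
  have hr2n : Z.card ≤ 2 ^ n := by
    have h := Finset.card_le_univ Z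
    rwa [Fintype.card_fun, ZMod.card, Fintype.card_fin] at h
  have hmn : m ≤ n := by
    calc m ≤ Nat.log 2 (2 ^ n) := Nat.log_mono_right hr2n
    _ = n := Nat.log_pow one_lt_two n
  have hDcard : 2 ^ m ≤ (Stmt4Aux.Dset Z).card :=
    le_trans h2m (Stmt4Aux.card_le_Dset Z)
  have hcomb := Stmt4Aux.downset_choose hd hmn (Stmt4Aux.Dset Z)
    (Stmt4Aux.Dset_downclosed Z) hDcard
  set Dsm := (Stmt4Aux.Dset Z).filter (fun S => S.card ≤ d) with hDsm
  -- linear independence of the standard monomials of degree ≤ d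
  have hindep : LinearIndependent (ZMod 2) (fun S : ↥Dsm => Stmt4Aux.mon Z S.1) := by
    apply Stmt4Aux.greedy_linearIndependent _ (fun S : ↥Dsm => Stmt4Aux.wt S.1)
    · intro a b hab
      exact Subtype.ext (Stmt4Aux.wt_inj hab)
    · intro S hmem
      have hSD : S.1 ∈ Stmt4Aux.Dset Z := (Finset.mem_filter.1 S.2).1
      apply Stmt4Aux.mem_Dset.1 hSD
      refine Submodule.span_mono ?_ hmem
      rintro v ⟨j, hj, rfl⟩
      exact ⟨j.1, hj, rfl⟩
  -- the span of degree-≤-d monomial functions on Z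
  have h1 : Dsm.card ≤ Module.finrank (ZMod 2)
      (Submodule.span (ZMod 2)
        (Set.range fun S : {S : Finset (Fin n) // S.card ≤ d} => Stmt4Aux.mon Z S.1)) := by
    have heq := finrank_span_eq_card hindep
    have hmono : Submodule.span (ZMod 2) (Set.range fun S : ↥Dsm => Stmt4Aux.mon Z S.1)
        ≤ Submodule.span (ZMod 2)
          (Set.range fun S : {S : Finset (Fin n) // S.card ≤ d} => Stmt4Aux.mon Z S.1) := by
      apply Submodule.span_mono
      rintro v ⟨S, rfl⟩
      exact ⟨⟨S.1, (Finset.mem_filter.1 S.2).2⟩, rfl⟩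
    have hfr := Submodule.finrank_mono hmono
    rw [heq, Fintype.card_coe] at hfr
    exact hfr
  -- the matrix of monomial evaluations: row space vs column space
  have h2 : Module.finrank (ZMod 2)
      (Submodule.span (ZMod 2)
        (Set.range fun S : {S : Finset (Fin n) // S.card ≤ d} => Stmt4Aux.mon Z S.1)) ≤ k := by
    let A : Matrix {S : Finset (Fin n) // S.card ≤ d} ↥Z (ZMod 2) :=
      fun S x => Stmt4Aux.mon Z S.1 x
    have hrow : (Set.range fun S : {S : Finset (Fin n) // S.card ≤ d} => Stmt4Aux.mon Z S.1)
        = Set.range A := rfl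
    have hcol : Set.range (Matrix.transpose A)
        = Set.range (fun x : ↥Z => extVec n d x.1) := by
      refine congrArg Set.range ?_
      funext x S
      rfl
    have h4 : Module.finrank (ZMod 2) V ≤ k := by
      have h := finrank_range_le_card (R := ZMod 2) (fun i => extVec n d (y i))
      rw [Fintype.card_fin] at h
      exact h
    have e1 : Module.finrank (ZMod 2) (Submodule.span (ZMod 2) (Set.range fun S : {S : Finset (Fin n) // S.card ≤ d} => Stmt4Aux.mon Z S.1)) = A.rank := by
      rw [hrow]
      exact (Matrix.rank_eq_finrank_span_row A).symm
    have e2 : A.rank = Module.finrank (ZMod 2) (Submodule.span (ZMod 2) (Set.range (Matrix.transpose A))) := Matrix.rank_eq_finrank_span_cols A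
    have e3 : Module.finrank (ZMod 2) (Submodule.span (ZMod 2) (Set.range (Matrix.transpose A))) ≤ Module.finrank (ZMod 2) V := by
      rw [hcol]
      refine Submodule.finrank_mono (Submodule.span_le.2 ?_)
      rintro v ⟨x, rfl⟩
      exact (Finset.mem_filter.1 x.2).2
    rw [e1, e2]
    exact le_trans e3 h4
  exact le_trans hcomb (le_trans h1 h2)
end

section
/- Fix integers d ≥ 1, n ≥ d + 1, and a testing pattern X ∈ F_2^{ℓ×m}. Then X is good for P_d (for functions on F_2^n) if and only if the following two conditions hold: (i) for every set S ⊆ [m] with |S| ≤ d, Σ_{i=1}^{ℓ} ∏_{j ∈ S} X_{ij} = 0 in F_2; and (ii) there exists a set S ⊆ [m] with |S| = d + 1 such that Σ_{i=1}^{ℓ} ∏_{j ∈ S} X_{ij} = 1 in F_2. -/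
open Finset

/-- `PolyDeg n d` : the set of functions `F₂ⁿ → F₂` that are polynomials of degree
at most `d` over `F₂`. -/
def PolyDeg (n d : ℕ) : Set ((Fin n → ZMod 2) → ZMod 2) :=
  {f | ∃ c : Finset (Fin n) → ZMod 2, ∀ x, f x =
    ∑ S ∈ Finset.univ.filter (fun S : Finset (Fin n) => S.card ≤ d),
      c S * ∏ i ∈ S, x i}

/-- `T_{X,f}(M) = Σ_i f(y_i)` where `y_1, …, y_ℓ` are the rows of `X * M`. -/
def patternSum {ℓ m n : ℕ} (X : Matrix (Fin ℓ) (Fin m) (ZMod 2))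
    (f : (Fin n → ZMod 2) → ZMod 2) (M : Matrix (Fin m) (Fin n) (ZMod 2)) : ZMod 2 :=
  ∑ i, f ((X * M) i)

/-- `X` is complete for `P_d`: `T_{X,f}(M) = 0` for every `f ∈ P_d` and every `M`. -/
def IsCompletePattern {ℓ m : ℕ} (n d : ℕ) (X : Matrix (Fin ℓ) (Fin m) (ZMod 2)) : Prop :=
  ∀ f ∈ PolyDeg n d, ∀ M : Matrix (Fin m) (Fin n) (ZMod 2), patternSum X f M = 0

/-- `X` is minimally sound for `P_d`: for every `f ∉ P_d` there is `M` with
`T_{X,f}(M) = 1`. -/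
def IsMinimallySoundPattern {ℓ m : ℕ} (n d : ℕ) (X : Matrix (Fin ℓ) (Fin m) (ZMod 2)) : Prop :=
  ∀ f : (Fin n → ZMod 2) → ZMod 2, f ∉ PolyDeg n d →
    ∃ M : Matrix (Fin m) (Fin n) (ZMod 2), patternSum X f M = 1

lemma z2 : ∀ a : ZMod 2, a = 0 ∨ a = 1 := by decide
lemma z2add : ∀ a : ZMod 2, a + a = 0 := by decide
lemma z2mul : ∀ a : ZMod 2, a * a = a := by decide
lemma z2ne1 {a : ZMod 2} (h : a ≠ 1) : a = 0 := by (cases z2 a) <;> tauto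
lemma z2ne0 {a : ZMod 2} (h : a ≠ 0) : a = 1 := by (cases z2 a) <;> tauto

def ind {k : ℕ} (S : Finset (Fin k)) : Fin k → ZMod 2 := fun i => if i ∈ S then 1 else 0

def mcoeff {k : ℕ} (f : (Fin k → ZMod 2) → ZMod 2) (S : Finset (Fin k)) : ZMod 2 :=
  ∑ T ∈ S.powerset, f (ind T)

lemma dbl {k : ℕ} (U : Finset (Fin k)) (F : Finset (Fin k) → ZMod 2) :
    ∑ S ∈ U.powerset, ∑ T ∈ S.powerset, F T = F U := by
  classical
  induction U using Finset.induction generalizing F with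
  | empty => simp
  | insert a U ha ih =>
    rw [Finset.sum_powerset_insert ha]
    have h2 : ∑ S ∈ U.powerset, ∑ T ∈ (insert a S).powerset, F T
        = ∑ S ∈ U.powerset, ((∑ T ∈ S.powerset, F T) + ∑ T ∈ S.powerset, F (insert a T)) := by
      refine Finset.sum_congr rfl fun S hS => ?_
      exact Finset.sum_powerset_insert (fun h => ha (Finset.mem_powerset.1 hS h)) _
    rw [h2, Finset.sum_add_distrib, ih, ← add_assoc, z2add, zero_add, ih]

lemma prod_ind {k : ℕ} (S U : Finset (Fin k)) :
    (∏ i ∈ S, ind U i) = if S ⊆ U then 1 else 0 := by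
  split_ifs with h
  · exact Finset.prod_eq_one fun i hi => by simp [ind, h hi]
  · obtain ⟨i, hiS, hiU⟩ := Finset.not_subset.1 h
    exact Finset.prod_eq_zero hiS (by simp [ind, hiU])

lemma expand {k : ℕ} (f : (Fin k → ZMod 2) → ZMod 2) (x : Fin k → ZMod 2) :
    f x = ∑ S : Finset (Fin k), mcoeff f S * ∏ i ∈ S, x i := by
  classical
  have ind_filter : ind (Finset.univ.filter fun i => x i = 1) = x := by
    funext i
    rcases z2 (x i) with h | h <;> simp [ind, h]
  have key : ∀ U : Finset (Fin k),
      f (ind U) = ∑ S : Finset (Fin k), mcoeff f S * ∏ i ∈ S, ind U i := by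
    intro U
    have h1 : ∀ S : Finset (Fin k), mcoeff f S * ∏ i ∈ S, ind U i
        = if S ⊆ U then mcoeff f S else 0 := by
      intro S; rw [prod_ind]; split_ifs <;> ring
    have h2 : Finset.univ.filter (fun S : Finset (Fin k) => S ⊆ U) = U.powerset := by
      ext S; simp
    simp_rw [h1, ← Finset.sum_filter, h2]
    exact (dbl U (fun T => f (ind T))).symm
  calc f x = f (ind (Finset.univ.filter fun i => x i = 1)) := by rw [ind_filter]
    _ = ∑ S : Finset (Fin k), mcoeff f S * ∏ i ∈ S,
          ind (Finset.univ.filter fun i => x i = 1) i := key _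
    _ = ∑ S : Finset (Fin k), mcoeff f S * ∏ i ∈ S, x i := by rw [ind_filter]

lemma unique {k : ℕ} (f : (Fin k → ZMod 2) → ZMod 2) (c : Finset (Fin k) → ZMod 2)
    (h : ∀ x, f x = ∑ S : Finset (Fin k), c S * ∏ i ∈ S, x i) (S : Finset (Fin k)) :
    c S = mcoeff f S := by
  classical
  have : ∀ T ∈ S.powerset, f (ind T) = ∑ R ∈ T.powerset, c R := by
    intro T _
    rw [h (ind T)]
    have h1 : ∀ R : Finset (Fin k), c R * ∏ i ∈ R, ind T i
        = if R ⊆ T then c R else 0 := by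
      intro R; rw [prod_ind]; split_ifs <;> ring
    simp_rw [h1, ← Finset.sum_filter]
    congr 1
    ext R; simp
  rw [mcoeff, Finset.sum_congr rfl this, dbl]

lemma mem_iff {k d : ℕ} (f : (Fin k → ZMod 2) → ZMod 2) :
    f ∈ PolyDeg k d ↔ ∀ S : Finset (Fin k), d + 1 ≤ S.card → mcoeff f S = 0 := by
  classical
  constructor
  · rintro ⟨c, hc⟩ S hS
    set c' : Finset (Fin k) → ZMod 2 := fun T => if T.card ≤ d then c T else 0 with hc'
    have h : ∀ x, f x = ∑ T : Finset (Fin k), c' T * ∏ i ∈ T, x i := by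
      intro x
      rw [hc x]
      rw [Finset.sum_filter]
      refine Finset.sum_congr rfl fun T _ => ?_
      simp only [hc']
      split_ifs <;> ring
    have := (unique f c' h S).symm
    rw [this, hc']
    simp only [if_neg (by omega : ¬ S.card ≤ d)]
  · intro h
    refine ⟨mcoeff f, fun x => ?_⟩
    rw [expand f x, ← Finset.sum_filter_add_sum_filter_not Finset.univ
      (fun S : Finset (Fin k) => S.card ≤ d)]
    have : ∀ S ∈ Finset.univ.filter (fun S : Finset (Fin k) => ¬ S.card ≤ d),
        mcoeff f S * ∏ i ∈ S, x i = 0 := by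
      intro S hS
      rw [h S (by simp at hS; omega), zero_mul]
    rw [Finset.sum_congr rfl this, Finset.sum_const_zero, add_zero]

lemma monomial_mem {k d : ℕ} (U : Finset (Fin k)) (hU : U.card ≤ d) :
    (fun x => ∏ i ∈ U, x i) ∈ PolyDeg k d := by
  classical
  refine ⟨fun S => if S = U then 1 else 0, fun x => ?_⟩
  show (∏ i ∈ U, x i) = _
  rw [Finset.sum_eq_single_of_mem U (by simp [hU]) (fun b _ hb => by simp [hb])]
  simp

lemma const_mul_mem {k d : ℕ} (a : ZMod 2) (f : (Fin k → ZMod 2) → ZMod 2)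
    (hf : f ∈ PolyDeg k d) : (fun x => a * f x) ∈ PolyDeg k d := by
  obtain ⟨c, hc⟩ := hf
  refine ⟨fun S => a * c S, fun x => ?_⟩
  show a * f x = _
  rw [hc x, Finset.mul_sum]
  exact Finset.sum_congr rfl fun S _ => by ring

lemma psum_mem {k d : ℕ} {ι : Type*} (A : Finset ι) (F : ι → (Fin k → ZMod 2) → ZMod 2)
    (hF : ∀ t ∈ A, F t ∈ PolyDeg k d) :
    (fun x => ∑ t ∈ A, F t x) ∈ PolyDeg k d := by
  classical
  induction A using Finset.induction with
  | empty => exact ⟨fun _ => 0, by simp⟩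
  | insert t A ha ih =>
    have h1 := hF t (Finset.mem_insert_self t A)
    have h2 := ih fun s hs => hF s (Finset.mem_insert_of_mem hs)
    obtain ⟨c1, hc1⟩ := h1
    obtain ⟨c2, hc2⟩ := h2
    refine ⟨fun S => c1 S + c2 S, fun x => ?_⟩
    show (∑ t ∈ insert t A, F t x) = _
    rw [Finset.sum_insert ha, hc1]
    have := hc2 x
    simp only [] at this
    rw [this, ← Finset.sum_add_distrib]
    exact Finset.sum_congr rfl fun S _ => by ring

lemma mono {k d d' : ℕ} (h : d ≤ d') {f : (Fin k → ZMod 2) → ZMod 2}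
    (hf : f ∈ PolyDeg k d) : f ∈ PolyDeg k d' := by
  rw [mem_iff] at hf ⊢
  exact fun S hS => hf S (by omega)

lemma z_mul_prod {k : ℕ} (z : Fin k → ZMod 2) (j : Fin k) (S : Finset (Fin k)) :
    z j * ∏ i ∈ S, z i = ∏ i ∈ insert j S, z i := by
  classical
  by_cases hj : j ∈ S
  · rw [Finset.insert_eq_self.2 hj, ← Finset.mul_prod_erase S _ hj, ← mul_assoc, z2mul]
  · rw [Finset.prod_insert hj]

lemma prod_linear_mem {k n : ℕ} (M : Matrix (Fin k) (Fin n) (ZMod 2))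
    (T : Finset (Fin n)) :
    (fun z : Fin k → ZMod 2 => ∏ t ∈ T, ∑ j, z j * M j t) ∈ PolyDeg k T.card := by
  classical
  induction T using Finset.induction with
  | empty => simpa using monomial_mem (∅ : Finset (Fin k)) (le_refl 0)
  | insert a T ha ih =>
    obtain ⟨c, hc⟩ := ih
    replace hc : ∀ x : Fin k → ZMod 2, (∏ t ∈ T, ∑ j, x j * M j t)
        = ∑ S ∈ Finset.univ.filter (fun S : Finset (Fin k) => S.card ≤ T.card),
            c S * ∏ i ∈ S, x i := hc
    have heq : ∀ z : Fin k → ZMod 2, (∏ t ∈ insert a T, ∑ j, z j * M j t)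
        = ∑ j, ∑ S ∈ Finset.univ.filter (fun S : Finset (Fin k) => S.card ≤ T.card),
            (M j a * c S) * ∏ i ∈ insert j S, z i := by
      intro z
      rw [Finset.prod_insert ha, hc z, Finset.sum_mul_sum]
      refine Finset.sum_congr rfl fun j _ => Finset.sum_congr rfl fun S _ => ?_
      rw [← z_mul_prod z j S]; ring
    have : (fun z : Fin k → ZMod 2 => ∏ t ∈ insert a T, ∑ j, z j * M j t)
        = fun z => ∑ j, ∑ S ∈ Finset.univ.filter (fun S : Finset (Fin k) => S.card ≤ T.card),
            (M j a * c S) * ∏ i ∈ insert j S, z i := funext heq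
    rw [this, Finset.card_insert_of_notMem ha]
    refine psum_mem _ _ fun j _ => psum_mem _ _ fun S hS => ?_
    refine const_mul_mem _ _ (monomial_mem _ ?_)
    simp only [Finset.mem_filter] at hS
    calc (insert j S).card ≤ S.card + 1 := Finset.card_insert_le _ _
      _ ≤ T.card + 1 := by omega

lemma key_sum {ℓ k : ℕ} (X : Matrix (Fin ℓ) (Fin k) (ZMod 2))
    (g : (Fin k → ZMod 2) → ZMod 2) :
    ∑ i, g (X i) = ∑ S : Finset (Fin k), mcoeff g S * ∑ i, ∏ j ∈ S, X i j := by
  have : ∀ i, g (X i) = ∑ S : Finset (Fin k), mcoeff g S * ∏ j ∈ S, X i j :=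
    fun i => expand g (X i)
  rw [Finset.sum_congr rfl fun i _ => this i, Finset.sum_comm]
  exact Finset.sum_congr rfl fun S _ => (Finset.mul_sum _ _ _).symm

lemma patternSum_eq {ℓ m n : ℕ} (X : Matrix (Fin ℓ) (Fin m) (ZMod 2))
    (f : (Fin n → ZMod 2) → ZMod 2) (M : Matrix (Fin m) (Fin n) (ZMod 2)) :
    patternSum X f M = ∑ i, (fun z : Fin m → ZMod 2 => f (fun t => ∑ j, z j * M j t)) (X i) := by
  exact Finset.sum_congr rfl fun i _ => congrArg f (funext fun t => Matrix.mul_apply)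

lemma z2sum (G : ZMod 2 → ZMod 2) : ∑ a : ZMod 2, G a = G 0 + G 1 := by
  have : (Finset.univ : Finset (ZMod 2)) = {0, 1} := by decide
  rw [this, Finset.sum_insert (by decide), Finset.sum_singleton]

lemma pi_succ_sum {k : ℕ} (F : (Fin (k+1) → ZMod 2) → ZMod 2) :
    ∑ z : Fin (k+1) → ZMod 2, F z
      = ∑ z : Fin k → ZMod 2, (F (Fin.cons 0 z) + F (Fin.cons 1 z)) := by
  rw [← (Fin.consEquiv (fun _ => ZMod 2)).sum_comp F, Fintype.sum_prod_type, z2sum]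
  rw [← Finset.sum_add_distrib]
  rfl

lemma ind_insert {k : ℕ} (j : Fin k) (T : Finset (Fin k)) (hj : j ∉ T) :
    ind (insert j T) = ind T + ind {j} := by
  classical
  funext i
  by_cases h : i = j
  · subst h; simp [ind, hj]
  · by_cases h2 : i ∈ T <;> simp [ind, h, h2]

lemma my_add_eq_zero {a b : ZMod 2} (h : a + b = 0) : b = a := by
  rcases z2 a with h1 | h1 <;> rcases z2 b with h2 | h2 <;> simp_all

lemma myderiv {n : ℕ} : ∀ (k : ℕ) (f : (Fin n → ZMod 2) → ZMod 2),
    (∀ y : Fin (k+1) → (Fin n → ZMod 2),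
      ∑ z : Fin (k+1) → ZMod 2, f (fun t => ∑ i, z i * y i t) = 0) →
    ∀ S : Finset (Fin n), k + 1 ≤ S.card → mcoeff f S = 0 := by
  intro k
  induction k with
  | zero =>
    intro f h S hS
    have hconst : ∀ x : Fin n → ZMod 2, f x = f (fun _ => 0) := by
      intro x
      have := h (fun _ => x)
      rw [pi_succ_sum] at this
      have hz : ∀ z : Fin 0 → ZMod 2,
          ((f fun t => ∑ i : Fin (0+1), (Fin.cons (0:ZMod 2) z : Fin (0+1) → ZMod 2) i * x t)
            + f fun t => ∑ i : Fin (0+1), (Fin.cons (1:ZMod 2) z : Fin (0+1) → ZMod 2) i * x t)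
          = f (fun _ => 0) + f x := by
        intro z
        congr 1
        · exact congrArg f (funext fun t => by simp)
        · exact congrArg f (funext fun t => by simp)
      rw [Finset.sum_congr rfl (fun z _ => hz z), Finset.sum_const] at this
      simp only [Finset.card_univ, Fintype.card_unique, one_smul] at this
      exact my_add_eq_zero this
    rw [mcoeff, Finset.sum_congr rfl fun T _ => hconst (ind T), Finset.sum_const,
      Finset.card_powerset, nsmul_eq_mul, Nat.cast_pow]
    have : ((2 : ℕ) : ZMod 2) = 0 := by decide
    rw [this, zero_pow (by omega), zero_mul]
  | succ k ih =>
    intro f h S hS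
    have hne : S.Nonempty := Finset.card_pos.1 (by omega)
    obtain ⟨j, hj⟩ := hne
    set v : Fin n → ZMod 2 := ind {j} with hv
    set fv : (Fin n → ZMod 2) → ZMod 2 := fun x => f (x + v) + f x with hfv
    have hA : ∀ y : Fin (k+1) → (Fin n → ZMod 2),
        ∑ z : Fin (k+1) → ZMod 2, fv (fun t => ∑ i, z i * y i t) = 0 := by
      intro y
      have := h (Fin.cons v y)
      rw [pi_succ_sum] at this
      rw [← this]
      refine Finset.sum_congr rfl fun z _ => ?_
      have e0 : (fun t => ∑ i : Fin (k+2), (Fin.cons (0 : ZMod 2) z : Fin (k+2) → ZMod 2) i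
            * (Fin.cons v y : Fin (k+2) → Fin n → ZMod 2) i t)
          = (fun t => ∑ i : Fin (k+1), z i * y i t) := by
        funext t
        rw [Fin.sum_univ_succ]
        simp
      have e1 : (fun t => ∑ i : Fin (k+2), (Fin.cons (1 : ZMod 2) z : Fin (k+2) → ZMod 2) i
            * (Fin.cons v y : Fin (k+2) → Fin n → ZMod 2) i t)
          = (fun t => ∑ i : Fin (k+1), z i * y i t) + v := by
        funext t
        rw [Fin.sum_univ_succ]
        simp [add_comm]
      rw [e0, e1, hfv]
      ring
    have hIH := ih fv hA (S.erase j) (by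
      have := Finset.card_erase_of_mem hj; omega)
    have hjer : j ∉ S.erase j := Finset.notMem_erase j S
    have hins : insert j (S.erase j) = S := Finset.insert_erase hj
    have hterm : ∀ T ∈ (S.erase j).powerset, fv (ind T) = f (ind (insert j T)) + f (ind T) := by
      intro T hT
      have hjT : j ∉ T := fun hc => hjer (Finset.mem_powerset.1 hT hc)
      rw [hfv, ind_insert j T hjT, hv]
    have lhs : mcoeff f S = (∑ T ∈ (S.erase j).powerset, f (ind T))
        + ∑ T ∈ (S.erase j).powerset, f (ind (insert j T)) := by
      rw [show mcoeff f S = ∑ T ∈ (insert j (S.erase j)).powerset, f (ind T) from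
        by rw [mcoeff, hins]]
      exact Finset.sum_powerset_insert hjer _
    have rhs : mcoeff fv (S.erase j) = (∑ T ∈ (S.erase j).powerset, f (ind (insert j T)))
        + ∑ T ∈ (S.erase j).powerset, f (ind T) := by
      rw [mcoeff, Finset.sum_congr rfl hterm, Finset.sum_add_distrib]
    rw [rhs] at hIH
    rw [lhs, add_comm]
    exact hIH

lemma complete_of_cond {ℓ m n d : ℕ} (X : Matrix (Fin ℓ) (Fin m) (ZMod 2))
    (hcond : ∀ S : Finset (Fin m), S.card ≤ d → ∑ i, ∏ j ∈ S, X i j = 0) :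
    IsCompletePattern n d X := by
  intro f hf M
  rw [patternSum_eq, key_sum X (fun z => f fun t => ∑ j, z j * M j t)]
  set g : (Fin m → ZMod 2) → ZMod 2 := fun z => f (fun t => ∑ j, z j * M j t) with hg
  have hgmem : g ∈ PolyDeg m d := by
    obtain ⟨c, hc⟩ := hf
    have : g = fun z => ∑ T ∈ Finset.univ.filter (fun T : Finset (Fin n) => T.card ≤ d),
        c T * ∏ t ∈ T, ∑ j, z j * M j t := by
      funext z; exact hc _
    rw [this]
    refine psum_mem _ _ fun T hT => const_mul_mem _ _ ?_
    simp only [Finset.mem_filter] at hT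
    exact mono hT.2 (prod_linear_mem M T)
  refine Finset.sum_eq_zero fun S _ => ?_
  by_cases hS : S.card ≤ d
  · rw [hcond S hS, mul_zero]
  · rw [(mem_iff g).1 hgmem S (by omega), zero_mul]

lemma cond_of_complete {ℓ m n d : ℕ} (hn : d + 1 ≤ n) (X : Matrix (Fin ℓ) (Fin m) (ZMod 2))
    (hX : IsCompletePattern n d X) :
    ∀ S : Finset (Fin m), S.card ≤ d → ∑ i, ∏ j ∈ S, X i j = 0 := by
  classical
  intro S hS
  have hcast : S.card ≤ n := by omega
  set e := S.orderIsoOfFin rfl with he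
  set U : Finset (Fin n) := Finset.univ.map (Fin.castLEEmb hcast) with hU
  have hUcard : U.card = S.card := by rw [hU, Finset.card_map, Finset.card_univ, Fintype.card_fin]
  set M : Matrix (Fin m) (Fin n) (ZMod 2) := fun j k =>
    if hj : j ∈ S then (if k = Fin.castLE hcast (e.symm ⟨j, hj⟩) then 1 else 0) else 0 with hM
  have hf : (fun x : Fin n → ZMod 2 => ∏ k ∈ U, x k) ∈ PolyDeg n d :=
    monomial_mem U (by omega)
  have hps := hX _ hf M
  rw [patternSum] at hps
  have hrow : ∀ i, (∏ k ∈ U, (X * M) i k) = ∏ j ∈ S, X i j := by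
    intro i
    rw [hU, Finset.prod_map]
    have hentry : ∀ t : Fin S.card, (X * M) i (Fin.castLEEmb hcast t) = X i ((e t : Fin m)) := by
      intro t
      rw [Matrix.mul_apply]
      rw [Finset.sum_eq_single ((e t : Fin m))]
      · have hmem : (e t : Fin m) ∈ S := (e t).2
        rw [hM]
        simp only [dif_pos hmem]
        have heq : e.symm ⟨(e t : Fin m), hmem⟩ = t := by
          rw [show (⟨(e t : Fin m), hmem⟩ : {x // x ∈ S}) = e t from Subtype.ext rfl]
          exact e.symm_apply_apply t
        rw [heq]
        simp
      · intro b _ hb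
        rw [hM]
        by_cases hbS : b ∈ S
        · simp only [dif_pos hbS]
          have hne : ¬ ((Fin.castLEEmb hcast) t = Fin.castLE hcast (e.symm ⟨b, hbS⟩)) := by
            intro hcontra
            apply hb
            have h1 : t = e.symm ⟨b, hbS⟩ := Fin.castLE_injective hcast hcontra
            have h2 : e t = ⟨b, hbS⟩ := by rw [h1, e.apply_symm_apply]
            rw [h2]
          rw [if_neg hne, mul_zero]
        · simp only [dif_neg hbS, mul_zero]
      · intro hcontra
        exact absurd (Finset.mem_univ _) hcontra
    rw [Finset.prod_congr rfl fun t _ => hentry t]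
    have h3 : ∏ t : Fin S.card, X i ((e t : Fin m)) = ∏ s : {x // x ∈ S}, X i (s : Fin m) :=
      Equiv.prod_comp e.toEquiv (fun s : {x // x ∈ S} => X i (s : Fin m))
    have h4 : ∏ s : {x // x ∈ S}, X i (s : Fin m) = ∏ j ∈ S, X i j := by
      rw [Finset.univ_eq_attach]; exact Finset.prod_attach S fun j => X i j
    rw [h3, h4]
  rw [← Finset.sum_congr rfl fun i _ => hrow i]
  exact hps

lemma monomial_coeff {k : ℕ} (U : Finset (Fin k)) :
    mcoeff (fun x => ∏ i ∈ U, x i) U = 1 := by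
  classical
  have h : ∀ x : Fin k → ZMod 2, (∏ i ∈ U, x i)
      = ∑ S : Finset (Fin k), (if S = U then (1 : ZMod 2) else 0) * ∏ i ∈ S, x i := by
    intro x
    rw [Finset.sum_eq_single_of_mem U (Finset.mem_univ U) (fun b _ hb => by simp [hb])]
    simp
  have := unique (fun x => ∏ i ∈ U, x i) _ h U
  rw [← this]
  simp

lemma monomial_not_mem {k d : ℕ} (U : Finset (Fin k)) (hU : d + 1 ≤ U.card) :
    (fun x => ∏ i ∈ U, x i) ∉ PolyDeg k d := by
  intro hmem
  have := (mem_iff _).1 hmem U hU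
  rw [monomial_coeff] at this
  exact one_ne_zero this

lemma cond2_of_sound {ℓ m n d : ℕ} (hn : d + 1 ≤ n) (X : Matrix (Fin ℓ) (Fin m) (ZMod 2))
    (hcond : ∀ S : Finset (Fin m), S.card ≤ d → ∑ i, ∏ j ∈ S, X i j = 0)
    (hsound : IsMinimallySoundPattern n d X) :
    ∃ S : Finset (Fin m), S.card = d + 1 ∧ ∑ i, ∏ j ∈ S, X i j = 1 := by
  classical
  set U : Finset (Fin n) := Finset.univ.map (Fin.castLEEmb hn) with hU
  have hUcard : U.card = d + 1 := by
    rw [hU, Finset.card_map, Finset.card_univ, Fintype.card_fin]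
  obtain ⟨M, hM⟩ := hsound (fun x => ∏ k ∈ U, x k) (monomial_not_mem U (by omega))
  rw [patternSum_eq, key_sum X (fun z => (fun x : Fin n → ZMod 2 => ∏ k ∈ U, x k)
    (fun t => ∑ j, z j * M j t))] at hM
  set g : (Fin m → ZMod 2) → ZMod 2 :=
    fun z => ∏ k ∈ U, ∑ j, z j * M j k with hg
  have hgmem : g ∈ PolyDeg m (d + 1) := by
    rw [hg, ← hUcard]
    exact prod_linear_mem M U
  by_contra hcon
  push_neg at hcon
  have hzero : ∑ S : Finset (Fin m), mcoeff g S * ∑ i, ∏ j ∈ S, X i j = 0 := by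
    refine Finset.sum_eq_zero fun S _ => ?_
    by_cases h1 : S.card ≤ d
    · rw [hcond S h1, mul_zero]
    by_cases h2 : S.card = d + 1
    · rw [z2ne1 (hcon S h2), mul_zero]
    · rw [(mem_iff g).1 hgmem S (by omega), zero_mul]
  exact one_ne_zero (by rw [← hM, hzero] : (1 : ZMod 2) = 0)

lemma sound_of_cond {ℓ m n d : ℕ} (X : Matrix (Fin ℓ) (Fin m) (ZMod 2))
    (hcond1 : ∀ S : Finset (Fin m), S.card ≤ d → ∑ i, ∏ j ∈ S, X i j = 0)
    (S₀ : Finset (Fin m)) (hS₀ : S₀.card = d + 1)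
    (hS₀sum : ∑ i, ∏ j ∈ S₀, X i j = 1) :
    IsMinimallySoundPattern n d X := by
  classical
  intro f hf
  have hexists : ∃ y : Fin (d+1) → (Fin n → ZMod 2),
      ∑ z : Fin (d+1) → ZMod 2, f (fun t => ∑ i, z i * y i t) = 1 := by
    by_contra h
    push_neg at h
    have h0 : ∀ y : Fin (d+1) → (Fin n → ZMod 2),
        ∑ z : Fin (d+1) → ZMod 2, f (fun t => ∑ i, z i * y i t) = 0 :=
      fun y => z2ne1 (h y)
    exact hf ((mem_iff f).2 (myderiv d f h0))
  obtain ⟨y, hy⟩ := hexists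
  set e := S₀.orderIsoOfFin hS₀ with he
  set M : Matrix (Fin m) (Fin n) (ZMod 2) := fun j t =>
    if hj : j ∈ S₀ then y (e.symm ⟨j, hj⟩) t else 0 with hM
  refine ⟨M, ?_⟩
  rw [patternSum_eq, key_sum X (fun z => f fun t => ∑ j, z j * M j t)]
  set g : (Fin m → ZMod 2) → ZMod 2 := fun z => f (fun t => ∑ j, z j * M j t) with hg
  have ha : ∀ z : Fin m → ZMod 2,
      g z = f (fun t => ∑ i : Fin (d+1), z ((e i : Fin m)) * y i t) := by
    intro z
    refine congrArg f (funext fun t => ?_)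
    show (∑ j, z j * M j t) = _
    have step1 : (∑ j, z j * M j t) = ∑ j ∈ S₀, z j * M j t := by
      refine (Finset.sum_subset (Finset.subset_univ S₀) ?_).symm
      intro j _ hj
      rw [hM]; simp only [dif_neg hj, mul_zero]
    rw [step1, ← Finset.sum_attach S₀ (fun j => z j * M j t), ← Finset.univ_eq_attach,
      ← Equiv.sum_comp e.toEquiv (fun a : {x // x ∈ S₀} => z (a : Fin m) * M (a : Fin m) t)]
    refine Finset.sum_congr rfl fun i _ => ?_
    have hmem : ((e i : Fin m)) ∈ S₀ := (e i).2
    show z ((e i : Fin m)) * M ((e i : Fin m)) t = _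
    rw [hM]; simp only [dif_pos hmem]
    have hsymm : e.symm ⟨(e i : Fin m), hmem⟩ = i := by
      rw [show (⟨(e i : Fin m), hmem⟩ : {x // x ∈ S₀}) = e i from Subtype.ext rfl,
        e.symm_apply_apply]
    rw [hsymm]
  have hb : ∀ S : Finset (Fin m), ¬ S ⊆ S₀ → mcoeff g S = 0 := by
    intro S hSsub
    obtain ⟨j1, hj1S, hj1S0⟩ := Finset.not_subset.1 hSsub
    rw [mcoeff]
    have htog : ∀ T : Finset (Fin m), j1 ∉ T → g (ind (insert j1 T)) = g (ind T) := by
      intro T hT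
      rw [ha, ha]
      refine congrArg f (funext fun t => Finset.sum_congr rfl fun i _ => ?_)
      have hne : (e i : Fin m) ≠ j1 := fun hc => hj1S0 (hc ▸ (e i).2)
      have : ind (insert j1 T) ((e i : Fin m)) = ind T ((e i : Fin m)) := by
        simp [ind, Finset.mem_insert, hne]
      rw [this]
    refine Finset.sum_involution (fun T _ => if j1 ∈ T then T.erase j1 else insert j1 T)
      (fun T hT => ?_) (fun T hT _ => ?_) (fun T hT => ?_) (fun T hT => ?_)
    · show g (ind T) + g (ind (if j1 ∈ T then T.erase j1 else insert j1 T)) = 0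
      by_cases hj : j1 ∈ T
      · rw [if_pos hj]
        have h2 : g (ind T) = g (ind (T.erase j1)) := by
          conv_lhs => rw [← Finset.insert_erase hj]
          exact htog _ (Finset.notMem_erase _ _)
        rw [h2, z2add]
      · rw [if_neg hj, htog T hj, z2add]
    · show (if j1 ∈ T then T.erase j1 else insert j1 T) ≠ T
      by_cases hj : j1 ∈ T
      · rw [if_pos hj]
        intro hcontra
        rw [← hcontra] at hj
        exact Finset.notMem_erase j1 T hj
      · rw [if_neg hj]
        intro hcontra
        rw [← hcontra] at hj
        exact hj (Finset.mem_insert_self j1 T)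
    · show (if j1 ∈ T then T.erase j1 else insert j1 T) ∈ S.powerset
      by_cases hj : j1 ∈ T
      · rw [if_pos hj]
        exact Finset.mem_powerset.2
          ((Finset.erase_subset _ _).trans (Finset.mem_powerset.1 hT))
      · rw [if_neg hj]
        exact Finset.mem_powerset.2
          (Finset.insert_subset hj1S (Finset.mem_powerset.1 hT))
    · show (if j1 ∈ (if j1 ∈ T then T.erase j1 else insert j1 T) then
            (if j1 ∈ T then T.erase j1 else insert j1 T).erase j1
          else insert j1 (if j1 ∈ T then T.erase j1 else insert j1 T)) = T
      by_cases hj : j1 ∈ T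
      · rw [if_pos hj, if_neg (Finset.notMem_erase j1 T), Finset.insert_erase hj]
      · rw [if_neg hj, if_pos (Finset.mem_insert_self j1 T), Finset.erase_insert hj]
  have hmain : (∑ S : Finset (Fin m), mcoeff g S * ∑ i, ∏ j ∈ S, X i j)
      = mcoeff g S₀ := by
    rw [← Finset.sum_subset (Finset.subset_univ S₀.powerset) (fun S _ hS => by
      rw [hb S (fun hsub => hS (Finset.mem_powerset.2 hsub)), zero_mul])]
    rw [Finset.sum_eq_single_of_mem S₀ (Finset.mem_powerset_self S₀) (fun S hSp hne => by
      have hsub := Finset.mem_powerset.1 hSp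
      have hcard : S.card ≤ d := by
        have hlt : S.card < S₀.card := Finset.card_lt_card (hsub.ssubset_of_ne hne)
        omega
      rw [hcond1 S hcard, mul_zero])]
    rw [hS₀sum, mul_one]
  rw [hmain]
  have he2 : mcoeff g S₀ = ∑ z : Fin (d+1) → ZMod 2, f (fun t => ∑ i, z i * y i t) := by
    rw [mcoeff]
    refine Finset.sum_nbij' (fun T => fun i : Fin (d+1) => ind T ((e i : Fin m)))
      (fun z => (Finset.univ.filter (fun i : Fin (d+1) => z i = 1)).image
        (fun i => ((e i : Fin m)))) (fun T _ => Finset.mem_univ _) ?_ ?_ ?_ ?_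
    · intro z _
      refine Finset.mem_powerset.2 fun x hx => ?_
      obtain ⟨i, _, rfl⟩ := Finset.mem_image.1 hx
      exact (e i).2
    · intro T hT
      have hsub := Finset.mem_powerset.1 hT
      ext j
      simp only [Finset.mem_image, Finset.mem_filter, Finset.mem_univ, true_and]
      constructor
      · rintro ⟨i, hi1, rfl⟩
        by_cases hmem : (e i : Fin m) ∈ T
        · exact hmem
        · exact absurd hi1 (by simp [ind, hmem])
      · intro hjT
        refine ⟨e.symm ⟨j, hsub hjT⟩, ?_, ?_⟩
        · have : (e (e.symm ⟨j, hsub hjT⟩) : Fin m) = j := by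
            rw [e.apply_symm_apply]
          rw [this]
          simp [ind, hjT]
        · rw [e.apply_symm_apply]
    · intro z _
      funext i
      have hinj : ∀ i' : Fin (d+1), (e i' : Fin m) = (e i : Fin m) → i' = i := by
        intro i' hcoe
        exact e.toEquiv.injective (Subtype.coe_injective hcoe)
      by_cases hz : z i = 1
      · have hmem : (e i : Fin m) ∈ (Finset.univ.filter
            (fun i : Fin (d+1) => z i = 1)).image (fun i => ((e i : Fin m))) := by
          exact Finset.mem_image.2 ⟨i, by simp [hz], rfl⟩
        simp [ind, hmem, hz]
      · have hmem : (e i : Fin m) ∉ (Finset.univ.filter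
            (fun i : Fin (d+1) => z i = 1)).image (fun i => ((e i : Fin m))) := by
          intro hc
          obtain ⟨i', hi', hcoe⟩ := Finset.mem_image.1 hc
          simp only [Finset.mem_filter, Finset.mem_univ, true_and] at hi'
          exact hz ((hinj i' hcoe) ▸ hi')
        simp only [ind, if_neg hmem]
        exact (z2ne1 hz).symm
    · intro T _
      exact ha (ind T)
  rw [he2, hy]

theorem stmt_6 (d n ℓ m : ℕ) (hd : 1 ≤ d) (hn : d + 1 ≤ n)
    (X : Matrix (Fin ℓ) (Fin m) (ZMod 2)) (hlm : m ≤ ℓ)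
    (hrows : Function.Injective X) (hrank : X.rank = m) :
    (IsCompletePattern n d X ∧ IsMinimallySoundPattern n d X) ↔
      ((∀ S : Finset (Fin m), S.card ≤ d → ∑ i, ∏ j ∈ S, X i j = 0) ∧
        (∃ S : Finset (Fin m), S.card = d + 1 ∧ ∑ i, ∏ j ∈ S, X i j = 1)) := by
  constructor
  · rintro ⟨hcomp, hsound⟩
    have hc1 := cond_of_complete hn X hcomp
    exact ⟨hc1, cond2_of_sound hn X hc1 hsound⟩
  · rintro ⟨hc1, S₀, hS₀, hS₀sum⟩
    exact ⟨complete_of_cond X hc1, sound_of_cond X hc1 S₀ hS₀ hS₀sum⟩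
end

section
/- Let d ≥ 1 and n ≥ 1 be integers, let ε ∈ (0, 1], and let X ∈ F_2^{ℓ×m} be a testing pattern with ℓ ≥ 3 whose rows are pairwise distinct and nonzero and which is good for P_d (for functions on F_2^n). Then for every function f : F_2^n → F_2 that is ε-far from P_d, the number of matrices M ∈ F_2^{m×n} with T_{X,f}(M) = 1 is at least min{ℓε/2, 1/(2ℓ²)} · 2^{mn}. Equivalently, for uniformly random M, the probability that T_{X,f}(M) = 1 is at least min{ℓε/2, 1/(2ℓ²)}. -/
open Finset

namespace Stmt8

section Count
variable {G H : Type*} [AddCommGroup G] [AddCommGroup H] [Fintype G] [Fintype H]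
  [DecidableEq H]

lemma fiber_card_eq (φ : G →+ H) (b : H) (a₀ : G) (h : φ a₀ = b) :
    (univ.filter fun a => φ a = b).card = (univ.filter fun a => φ a = 0).card := by
  apply Finset.card_bij (fun a _ => a - a₀)
  · intro a ha
    simp only [mem_filter, mem_univ, true_and] at ha ⊢
    rw [map_sub, ha, h, sub_self]
  · intro a ha a' ha' hh
    have := congrArg (· + a₀) hh
    simpa using this
  · intro c hc
    refine ⟨c + a₀, ?_, by simp⟩
    simp only [mem_filter, mem_univ, true_and] at hc ⊢
    rw [map_add, hc, h, zero_add]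

lemma count_comp (φ : G →+ H) (P : H → Prop) [DecidablePred P] :
    (univ.filter fun a => P (φ a)).card =
      (univ.filter fun h => P h ∧ ∃ a, φ a = h).card *
        (univ.filter fun a => φ a = 0).card := by
  classical
  rw [Finset.card_eq_sum_card_fiberwise
      (f := fun a => φ a) (t := univ.filter fun h => P h ∧ ∃ a, φ a = h)
      (fun a ha => by
        simp only [Finset.mem_coe, mem_filter, mem_univ, true_and] at ha ⊢
        exact ⟨ha, a, rfl⟩)]
  have key : ∀ h ∈ (univ.filter fun h => P h ∧ ∃ a, φ a = h),
      ((univ.filter fun a => P (φ a)).filter fun a => φ a = h).card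
        = (univ.filter fun a => φ a = 0).card := by
    intro h hh
    simp only [mem_filter, mem_univ, true_and] at hh
    obtain ⟨hP, a₀, ha₀⟩ := hh
    rw [← fiber_card_eq φ h a₀ ha₀]
    congr 1
    ext a
    simp only [mem_filter, mem_univ, true_and]
    constructor
    · rintro ⟨-, h2⟩; exact h2
    · intro h2; exact ⟨h2 ▸ hP, h2⟩
  rw [Finset.sum_congr rfl key, Finset.sum_const, smul_eq_mul]

lemma count_surj (φ : G →+ H) (hs : Function.Surjective φ) (P : H → Prop)
    [DecidablePred P] :
    (univ.filter fun a => P (φ a)).card =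
      (univ.filter P).card * (univ.filter fun a => φ a = 0).card := by
  rw [count_comp]
  congr 2
  ext h
  simp only [mem_filter, mem_univ, true_and, and_iff_left_iff_imp]
  intro _; exact hs h

lemma card_total (φ : G →+ H) (hs : Function.Surjective φ) :
    Fintype.card G = Fintype.card H * (univ.filter fun a => φ a = 0).card := by
  have := count_surj φ hs (fun _ => True)
  simpa using this

end Count

-- ZMod 2 facts
lemma z2em : ∀ a : ZMod 2, a = 0 ∨ a = 1 := by decide
lemma z2ne1 : ∀ a b : ZMod 2, a ≠ b → a + b = 1 := by decide
lemma z2addself : ∀ a : ZMod 2, a + a = 0 := by decide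
lemma z2nz : ∀ a : ZMod 2, a ≠ 0 → a = 1 := by decide
lemma z2nz' : ∀ a : ZMod 2, a ≠ 1 → a = 0 := by decide
lemma z2nediff : ∀ a b : ZMod 2, a ≠ b ↔ a + b = 1 := by decide

section VM
variable {m n : ℕ}

def vm (x : Fin m → ZMod 2) (M : Matrix (Fin m) (Fin n) (ZMod 2)) : Fin n → ZMod 2 :=
  fun t => ∑ k, x k * M k t

lemma vm_add (x : Fin m → ZMod 2) (M N : Matrix (Fin m) (Fin n) (ZMod 2)) :
    vm x (M + N) = vm x M + vm x N := by
  funext t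
  simp [vm, Matrix.add_apply, mul_add, Finset.sum_add_distrib]

def vmHom (x : Fin m → ZMod 2) : Matrix (Fin m) (Fin n) (ZMod 2) →+ (Fin n → ZMod 2) :=
  AddMonoidHom.mk' (vm x) (vm_add x)

def pairHom (x y : Fin m → ZMod 2) :
    Matrix (Fin m) (Fin n) (ZMod 2) →+ (Fin n → ZMod 2) × (Fin n → ZMod 2) :=
  AddMonoidHom.mk' (fun M => (vm x M, vm y M))
    (by intro M N; simp [vm_add, Prod.ext_iff])

abbrev Rsp (m n : ℕ) := Fin m → Fin m → Fin n → ZMod 2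

def rowA (y : Fin m → ZMod 2) (R : Rsp m n) : Matrix (Fin m) (Fin n) (ZMod 2) :=
  Matrix.of fun b t => ∑ a, y a * R a b t

def colA (z : Fin m → ZMod 2) (R : Rsp m n) : Matrix (Fin m) (Fin n) (ZMod 2) :=
  Matrix.of fun a t => ∑ b, z b * R a b t

lemma rowA_add (y : Fin m → ZMod 2) (R S : Rsp m n) :
    rowA y (R + S) = rowA y R + rowA y S := by
  ext b t
  simp [rowA, Matrix.add_apply, mul_add, Finset.sum_add_distrib]

lemma colA_add (z : Fin m → ZMod 2) (R S : Rsp m n) :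
    colA z (R + S) = colA z R + colA z S := by
  ext a t
  simp [colA, Matrix.add_apply, mul_add, Finset.sum_add_distrib]

def rowColHom (y z : Fin m → ZMod 2) :
    Rsp m n →+ Matrix (Fin m) (Fin n) (ZMod 2) × Matrix (Fin m) (Fin n) (ZMod 2) :=
  AddMonoidHom.mk' (fun R => (rowA y R, colA z R))
    (by intro R S; simp [rowA_add, colA_add, Prod.ext_iff])

def colColHom (y z : Fin m → ZMod 2) :
    Rsp m n →+ Matrix (Fin m) (Fin n) (ZMod 2) × Matrix (Fin m) (Fin n) (ZMod 2) :=
  AddMonoidHom.mk' (fun R => (colA y R, colA z R))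
    (by intro R S; simp [colA_add, Prod.ext_iff])

def colHom (z : Fin m → ZMod 2) : Rsp m n →+ Matrix (Fin m) (Fin n) (ZMod 2) :=
  AddMonoidHom.mk' (colA z) (colA_add z)

def subHom (y z : Fin m → ZMod 2) :
    Matrix (Fin m) (Fin n) (ZMod 2) × Matrix (Fin m) (Fin n) (ZMod 2) →+
      (Fin n → ZMod 2) :=
  AddMonoidHom.mk' (fun p => vm z p.1 - vm y p.2)
    (by intro p q; simp [vm_add]; abel)

-- sum helpers
lemma sum_factor (x u : Fin m → ZMod 2) (c : ZMod 2) :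
    ∑ k, x k * (u k * c) = (∑ k, x k * u k) * c := by
  rw [Finset.sum_mul]
  exact Finset.sum_congr rfl fun k _ => by ring

lemma sum_pull (x g : Fin m → ZMod 2) (c : ZMod 2) :
    ∑ k, x k * (c * g k) = c * ∑ k, x k * g k := by
  rw [Finset.mul_sum]
  exact Finset.sum_congr rfl fun k _ => by ring

lemma sum_mul_indicator (x : Fin m → ZMod 2) (c : Fin m) :
    ∑ k, x k * (if k = c then (1 : ZMod 2) else 0) = x c := by
  rw [Finset.sum_eq_single c]
  · simp
  · intro b _ hb; simp [hb]
  · intro h; exact absurd (mem_univ c) h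

lemma exists_single (x : Fin m → ZMod 2) (hx : x ≠ 0) :
    ∃ u : Fin m → ZMod 2, ∑ a, x a * u a = 1 := by
  have hc : ∃ c, x c ≠ 0 := by
    by_contra h
    push_neg at h
    exact hx (funext fun c => h c)
  obtain ⟨c, hc⟩ := hc
  refine ⟨fun k => if k = c then 1 else 0, ?_⟩
  rw [sum_mul_indicator]
  exact z2nz _ hc

lemma exists_dual (x y : Fin m → ZMod 2) (hx : x ≠ 0) (hxy : x ≠ y) :
    ∃ u : Fin m → ZMod 2, (∑ a, x a * u a) = 1 ∧ (∑ a, y a * u a) = 0 := by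
  by_cases hcase : ∃ c, x c = 1 ∧ y c = 0
  · obtain ⟨c, h1, h2⟩ := hcase
    refine ⟨fun k => if k = c then 1 else 0, ?_, ?_⟩ <;>
      rw [sum_mul_indicator] <;> assumption
  · push_neg at hcase
    have hcc : ∃ c, x c ≠ y c := by
      by_contra h
      push_neg at h
      exact hxy (funext h)
    obtain ⟨c, hc⟩ := hcc
    have hxc : x c = 0 ∧ y c = 1 := by
      rcases z2em (x c) with h | h <;> rcases z2em (y c) with h' | h' <;>
        first
          | (exact ⟨h, h'⟩)
          | (exfalso; simp_all)
          | (exfalso; exact hc (by rw [h, h']))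
          | (exfalso; exact (hcase c h) h')
    obtain ⟨c', hc'⟩ : ∃ c', x c' = 1 := by
      have : ∃ c', x c' ≠ 0 := by
        by_contra h; push_neg at h; exact hx (funext fun a => h a)
      obtain ⟨c', h⟩ := this; exact ⟨c', z2nz _ h⟩
    have hyc' : y c' = 1 := by
      by_contra h
      exact (hcase c' hc') (z2nz' _ h)
    have hne : c ≠ c' := fun e => by rw [e, hc'] at hxc; exact one_ne_zero hxc.1
    refine ⟨fun k => (if k = c then 1 else 0) + (if k = c' then 1 else 0), ?_, ?_⟩ <;>
      simp only [mul_add, Finset.sum_add_distrib, sum_mul_indicator] <;>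
      · first
          | (rw [hxc.1, hc']; decide)
          | (rw [hxc.2, hyc']; decide)

lemma vmHom_surj (x : Fin m → ZMod 2) (hx : x ≠ 0) :
    Function.Surjective (vmHom (n := n) x) := by
  obtain ⟨u, hu⟩ := exists_single x hx
  intro v
  refine ⟨Matrix.of fun k t => u k * v t, ?_⟩
  funext t
  show ∑ k, x k * (u k * v t) = v t
  rw [sum_factor, hu, one_mul]

lemma pairHom_surj (x y : Fin m → ZMod 2) (hx : x ≠ 0) (hy : y ≠ 0) (hxy : x ≠ y) :
    Function.Surjective (pairHom (n := n) x y) := by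
  obtain ⟨u, hu1, hu2⟩ := exists_dual x y hx hxy
  obtain ⟨w, hw1, hw2⟩ := exists_dual y x hy (Ne.symm hxy)
  rintro ⟨v, v'⟩
  refine ⟨Matrix.of fun k t => u k * v t + w k * v' t, ?_⟩
  have h1 : vm x (Matrix.of fun k t => u k * v t + w k * v' t) = v := by
    funext t
    show ∑ k, x k * (u k * v t + w k * v' t) = v t
    simp only [mul_add, Finset.sum_add_distrib, sum_factor, hu1, hw2, one_mul, zero_mul,
      add_zero]
  have h2 : vm y (Matrix.of fun k t => u k * v t + w k * v' t) = v' := by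
    funext t
    show ∑ k, y k * (u k * v t + w k * v' t) = v' t
    simp only [mul_add, Finset.sum_add_distrib, sum_factor, hu2, hw1, one_mul, zero_mul,
      zero_add]
  exact Prod.ext h1 h2

lemma colHom_surj (z : Fin m → ZMod 2) (hz : z ≠ 0) :
    Function.Surjective (colHom (n := n) z) := by
  obtain ⟨u, hu⟩ := exists_single z hz
  intro M
  refine ⟨fun a b t => u b * M a t, ?_⟩
  ext a t
  show ∑ b, z b * (u b * M a t) = M a t
  rw [sum_factor, hu, one_mul]

lemma colColHom_surj (y z : Fin m → ZMod 2) (hy : y ≠ 0) (hz : z ≠ 0) (hyz : y ≠ z) :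
    Function.Surjective (colColHom (n := n) y z) := by
  obtain ⟨u, hu1, hu2⟩ := exists_dual y z hy hyz
  obtain ⟨w, hw1, hw2⟩ := exists_dual z y hz (Ne.symm hyz)
  rintro ⟨M, M'⟩
  refine ⟨fun a b t => u b * M a t + w b * M' a t, ?_⟩
  have h1 : colA y (fun a b t => u b * M a t + w b * M' a t) = M := by
    ext a t
    show ∑ b, y b * (u b * M a t + w b * M' a t) = M a t
    simp only [mul_add, Finset.sum_add_distrib, sum_factor, hu1, hw2, one_mul, zero_mul,
      add_zero]
  have h2 : colA z (fun a b t => u b * M a t + w b * M' a t) = M' := by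
    ext a t
    show ∑ b, z b * (u b * M a t + w b * M' a t) = M' a t
    simp only [mul_add, Finset.sum_add_distrib, sum_factor, hu2, hw1, one_mul, zero_mul,
      zero_add]
  exact Prod.ext h1 h2

lemma subHom_surj (y z : Fin m → ZMod 2) (hz : z ≠ 0) :
    Function.Surjective (subHom (n := n) y z) := by
  intro v
  obtain ⟨M, hM⟩ := vmHom_surj z hz v
  refine ⟨(M, 0), ?_⟩
  show vm z M - vm y 0 = v
  have h0 : vm y (0 : Matrix (Fin m) (Fin n) (ZMod 2)) = 0 := by
    funext t; simp [vm]
  rw [h0, sub_zero]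
  exact hM

lemma vm_rowA (w y : Fin m → ZMod 2) (R : Rsp m n) :
    vm w (rowA y R) = vm y (colA w R) := by
  funext t
  show ∑ b, w b * ∑ a, y a * R a b t = ∑ a, y a * ∑ b, w b * R a b t
  simp only [Finset.mul_sum]
  rw [Finset.sum_comm]
  exact Finset.sum_congr rfl fun a _ => Finset.sum_congr rfl fun b _ => by ring

lemma rowCol_range (y z : Fin m → ZMod 2) (hy : y ≠ 0) (hz : z ≠ 0)
    (p : Matrix (Fin m) (Fin n) (ZMod 2) × Matrix (Fin m) (Fin n) (ZMod 2)) :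
    (∃ R, rowColHom y z R = p) ↔ vm z p.1 = vm y p.2 := by
  obtain ⟨M, M'⟩ := p
  constructor
  · rintro ⟨R, hR⟩
    have h1 : rowA y R = M := congrArg Prod.fst hR
    have h2 : colA z R = M' := congrArg Prod.snd hR
    rw [← h1, ← h2]
    exact vm_rowA z y R
  · intro hMM
    replace hMM : vm z M = vm y M' := hMM
    obtain ⟨u, hu⟩ := exists_single y hy
    obtain ⟨v, hv⟩ := exists_single z hz
    refine ⟨fun a b t => u a * M b t + (v b * M' a t + u a * (v b * vm z M t)), ?_⟩
    have h1 : rowA y (fun a b t => u a * M b t + (v b * M' a t + u a * (v b * vm z M t)))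
        = M := by
      ext b t
      show ∑ a, y a * (u a * M b t + (v b * M' a t + u a * (v b * vm z M t))) = M b t
      simp only [mul_add, Finset.sum_add_distrib, sum_factor, sum_pull, hu, one_mul]
      have hals : (∑ a, y a * M' a t) = vm z M t := by
        show vm y M' t = vm z M t
        rw [hMM]
      rw [hals, z2addself, add_zero]
    have h2 : colA z (fun a b t => u a * M b t + (v b * M' a t + u a * (v b * vm z M t)))
        = M' := by
      ext a t
      show ∑ b, z b * (u a * M b t + (v b * M' a t + u a * (v b * vm z M t))) = M' a t
      simp only [mul_add, Finset.sum_add_distrib, sum_factor, sum_pull, hv, one_mul]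
      have : (∑ b, z b * M b t) = vm z M t := rfl
      rw [this, add_comm (M' a t), ← add_assoc, z2addself, zero_add]
    exact Prod.ext h1 h2

end VM

section Cards

lemma card_V (n : ℕ) : Fintype.card (Fin n → ZMod 2) = 2 ^ n := by
  rw [Fintype.card_fun, ZMod.card, Fintype.card_fin]

lemma card_Mat (m n : ℕ) : Fintype.card (Matrix (Fin m) (Fin n) (ZMod 2)) = (2 ^ n) ^ m := by
  rw [Fintype.card_congr (Matrix.of (m := Fin m) (n := Fin n) (α := ZMod 2)).symm,
    Fintype.card_fun, card_V, Fintype.card_fin]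

lemma card_Rsp (m n : ℕ) : Fintype.card (Rsp m n) = ((2 ^ n) ^ m) ^ m := by
  rw [Fintype.card_fun, Fintype.card_fun, card_V, Fintype.card_fin]

end Cards

section ProdCount
variable {α γ : Type*} [Fintype α] [Fintype γ] [DecidableEq α] [DecidableEq γ]

lemma card_filter_prod (p : α → Prop) (q : γ → Prop) [DecidablePred p] [DecidablePred q] :
    (univ.filter fun z : α × γ => p z.1 ∧ q z.2).card
      = (univ.filter p).card * (univ.filter q).card := by
  rw [← Finset.card_product, ← Finset.filter_product, Finset.univ_product_univ]

lemma card_prod_dep (p : α → Prop) [DecidablePred p]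
    (q : α → γ → Prop) [∀ a, DecidablePred (q a)] (Fp : ℕ)
    (hq : ∀ a, p a → (univ.filter (q a)).card = Fp) :
    (univ.filter fun z : α × γ => p z.1 ∧ q z.1 z.2).card = (univ.filter p).card * Fp := by
  rw [Finset.card_eq_sum_card_fiberwise (f := fun z : α × γ => z.1) (t := univ.filter p)
      (fun z hz => by
        simp only [Finset.mem_coe, mem_filter, mem_univ, true_and] at hz ⊢
        exact hz.1)]
  have key : ∀ a ∈ univ.filter p,
      ((univ.filter fun z : α × γ => p z.1 ∧ q z.1 z.2).filter fun z => z.1 = a).card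
        = Fp := by
    intro a ha
    simp only [mem_filter, mem_univ, true_and] at ha
    rw [← hq a ha]
    apply Finset.card_bij (fun z _ => z.2)
    · intro z hz
      simp only [mem_filter, mem_univ, true_and] at hz ⊢
      obtain ⟨⟨h1, h2⟩, h3⟩ := hz
      rw [← h3]; exact h2
    · intro z hz z' hz' hzz
      simp only [mem_filter, mem_univ, true_and] at hz hz'
      exact Prod.ext (hz.2.trans hz'.2.symm) hzz
    · intro c hc
      simp only [mem_filter, mem_univ, true_and] at hc
      exact ⟨(a, c), by simp [ha, hc], rfl⟩
  rw [Finset.sum_congr rfl key, Finset.sum_const, smul_eq_mul]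

lemma card_prod_dep' (p : γ → Prop) [DecidablePred p]
    (q : γ → α → Prop) [∀ c, DecidablePred (q c)] (Fp : ℕ)
    (hq : ∀ c, p c → (univ.filter (q c)).card = Fp) :
    (univ.filter fun z : α × γ => p z.2 ∧ q z.2 z.1).card = (univ.filter p).card * Fp := by
  rw [Finset.card_eq_sum_card_fiberwise (f := fun z : α × γ => z.2) (t := univ.filter p)
      (fun z hz => by
        simp only [Finset.mem_coe, mem_filter, mem_univ, true_and] at hz ⊢
        exact hz.1)]
  have key : ∀ c ∈ univ.filter p,
      ((univ.filter fun z : α × γ => p z.2 ∧ q z.2 z.1).filter fun z => z.2 = c).card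
        = Fp := by
    intro c hc
    simp only [mem_filter, mem_univ, true_and] at hc
    rw [← hq c hc]
    apply Finset.card_bij (fun z _ => z.1)
    · intro z hz
      simp only [mem_filter, mem_univ, true_and] at hz ⊢
      obtain ⟨⟨h1, h2⟩, h3⟩ := hz
      rw [← h3]; exact h2
    · intro z hz z' hz' hzz
      simp only [mem_filter, mem_univ, true_and] at hz hz'
      exact Prod.ext hzz (hz.2.trans hz'.2.symm)
    · intro a ha
      simp only [mem_filter, mem_univ, true_and] at ha
      exact ⟨(a, c), by simp [ha, hc], rfl⟩
  rw [Finset.sum_congr rfl key, Finset.sum_const, smul_eq_mul]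

lemma card_prod_right_eq (r : α → Prop) [DecidablePred r] (c₀ : γ) :
    (univ.filter fun z : α × γ => z.2 = c₀ ∧ r z.1).card = (univ.filter r).card := by
  apply Finset.card_bij (fun z _ => z.1)
  · intro z hz
    simp only [mem_filter, mem_univ, true_and] at hz ⊢
    exact hz.2
  · intro z hz z' hz' hzz
    simp only [mem_filter, mem_univ, true_and] at hz hz'
    exact Prod.ext hzz (hz.1.trans hz'.1.symm)
  · intro a ha
    simp only [mem_filter, mem_univ, true_and] at ha
    exact ⟨(a, c₀), by simp [ha], rfl⟩

end ProdCount
section Main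
variable {ℓ m n : ℕ} [NeZero ℓ] (X : Matrix (Fin ℓ) (Fin m) (ZMod 2))
  (f : (Fin n → ZMod 2) → ZMod 2)

lemma patternSum_eq (h : (Fin n → ZMod 2) → ZMod 2) (M : Matrix (Fin m) (Fin n) (ZMod 2)) :
    patternSum X h M = ∑ i, h (vm (X i) M) := by
  unfold patternSum
  exact Finset.sum_congr rfl fun i _ => rfl

def voteF (M : Matrix (Fin m) (Fin n) (ZMod 2)) : ZMod 2 :=
  patternSum X f M + f (vm (X 0) M)

def rhoCnt : ℕ :=
  (univ.filter fun M : Matrix (Fin m) (Fin n) (ZMod 2) => patternSum X f M = 1).card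

def Ncnt (c : ZMod 2) (x : Fin n → ZMod 2) : ℕ :=
  (univ.filter fun M : Matrix (Fin m) (Fin n) (ZMod 2) =>
    vm (X 0) M = x ∧ voteF X f M = c).card

def gfun (x : Fin n → ZMod 2) : ZMod 2 := if Ncnt X f 0 x < Ncnt X f 1 x then 1 else 0

def mu (x : Fin n → ZMod 2) : ℕ := min (Ncnt X f 0 x) (Ncnt X f 1 x)

-- cardinality relations
lemma Sx_card (h0 : X 0 ≠ 0) (x : Fin n → ZMod 2) :
    (univ.filter fun M : Matrix (Fin m) (Fin n) (ZMod 2) => vm (X 0) M = x).card * 2 ^ n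
      = (2 ^ n) ^ m := by
  have h1 := count_surj (vmHom (n := n) (X 0)) (vmHom_surj _ h0) (fun v => v = x)
  have h2 := card_total (vmHom (n := n) (X 0)) (vmHom_surj _ h0)
  rw [card_Mat, card_V] at h2
  have h3 : (univ.filter fun v : Fin n → ZMod 2 => v = x).card = 1 := by
    rw [Finset.filter_eq']
    simp
  rw [h3, one_mul] at h1
  have : (univ.filter fun M : Matrix (Fin m) (Fin n) (ZMod 2) => vm (X 0) M = x)
      = (univ.filter fun M => vmHom (n := n) (X 0) M = x) := rfl
  rw [this, h1, mul_comm]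
  exact h2.symm

lemma pair_fiber_card (x y : Fin m → ZMod 2) (hx : x ≠ 0) (hy : y ≠ 0) (hxy : x ≠ y)
    (v w : Fin n → ZMod 2) :
    (univ.filter fun M : Matrix (Fin m) (Fin n) (ZMod 2) =>
        vm x M = v ∧ vm y M = w).card * (2 ^ n * 2 ^ n) = (2 ^ n) ^ m := by
  have hs := pairHom_surj (n := n) x y hx hy hxy
  have h1 := count_surj (pairHom (n := n) x y) hs (fun p => p = (v, w))
  have h2 := card_total (pairHom (n := n) x y) hs
  rw [card_Mat, Fintype.card_prod, card_V] at h2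
  have h3 : (univ.filter fun p : (Fin n → ZMod 2) × (Fin n → ZMod 2) => p = (v, w)).card
      = 1 := by
    rw [Finset.filter_eq']
    simp
  rw [h3, one_mul] at h1
  have h4 : (univ.filter fun M : Matrix (Fin m) (Fin n) (ZMod 2) =>
      vm x M = v ∧ vm y M = w)
      = (univ.filter fun M => pairHom (n := n) x y M = (v, w)) := by
    apply Finset.filter_congr
    intro M _
    constructor
    · rintro ⟨hq1, hq2⟩; exact Prod.ext hq1 hq2
    · intro hq; exact ⟨congrArg Prod.fst hq, congrArg Prod.snd hq⟩
  rw [h4, h1, mul_comm]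
  exact h2.symm

lemma ker_rowCol (y z : Fin m → ZMod 2) (hy : y ≠ 0) (hz : z ≠ 0) :
    (univ.filter fun R : Rsp m n => rowColHom y z R = 0).card
        * ((2 ^ n) ^ m * (2 ^ n) ^ m)
      = Fintype.card (Rsp m n) * 2 ^ n := by
  have h1 := count_comp (rowColHom (n := n) y z) (fun _ => True)
  simp only [true_and, Finset.filter_true] at h1
  -- h1 : card Rsp (as univ.card) = W * κ
  have hW : (univ.filter fun p : Matrix (Fin m) (Fin n) (ZMod 2)
        × Matrix (Fin m) (Fin n) (ZMod 2) => ∃ a, rowColHom y z a = p)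
      = (univ.filter fun p => subHom (n := n) y z p = 0) := by
    apply Finset.filter_congr
    intro p _
    rw [rowCol_range y z hy hz p]
    constructor
    · intro h; show vm z p.1 - vm y p.2 = 0; rw [h, sub_self]
    · intro h; exact sub_eq_zero.mp h
  have h2 := card_total (subHom (n := n) y z) (subHom_surj y z hz)
  rw [Fintype.card_prod, card_Mat, card_V] at h2
  -- h2 : DM * DM = 2^n * κsub
  rw [hW] at h1
  rw [Finset.card_univ] at h1
  calc (univ.filter fun R : Rsp m n => rowColHom y z R = 0).card
        * ((2 ^ n) ^ m * (2 ^ n) ^ m)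
      = (univ.filter fun R : Rsp m n => rowColHom y z R = 0).card
        * (2 ^ n * (univ.filter fun p => subHom (n := n) y z p = 0).card) := by rw [← h2]
    _ = ((univ.filter fun p => subHom (n := n) y z p = 0).card
        * (univ.filter fun R : Rsp m n => rowColHom y z R = 0).card) * 2 ^ n := by ring
    _ = Fintype.card (Rsp m n) * 2 ^ n := by rw [← h1]

lemma ker_colCol (y z : Fin m → ZMod 2) (hy : y ≠ 0) (hz : z ≠ 0) (hyz : y ≠ z) :
    (univ.filter fun R : Rsp m n => colColHom y z R = 0).card
        * ((2 ^ n) ^ m * (2 ^ n) ^ m)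
      = Fintype.card (Rsp m n) := by
  have h2 := card_total (colColHom (n := n) y z) (colColHom_surj y z hy hz hyz)
  rw [Fintype.card_prod, card_Mat] at h2
  rw [mul_comm]
  exact h2.symm

lemma ker_col (z : Fin m → ZMod 2) (hz : z ≠ 0) :
    (univ.filter fun R : Rsp m n => colHom z R = 0).card * (2 ^ n) ^ m
      = Fintype.card (Rsp m n) := by
  have h2 := card_total (colHom (n := n) z) (colHom_surj z hz)
  rw [card_Mat] at h2
  rw [mul_comm]
  exact h2.symm

@[simp] lemma rowColHom_apply (y z : Fin m → ZMod 2) (R : Rsp m n) :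
    rowColHom y z R = (rowA y R, colA z R) := rfl
@[simp] lemma colColHom_apply (y z : Fin m → ZMod 2) (R : Rsp m n) :
    colColHom y z R = (colA y R, colA z R) := rfl
@[simp] lemma colHom_apply (z : Fin m → ZMod 2) (R : Rsp m n) :
    colHom z R = colA z R := rfl
@[simp] lemma vmHom_apply (x : Fin m → ZMod 2) (M : Matrix (Fin m) (Fin n) (ZMod 2)) :
    vmHom x M = vm x M := rfl
@[simp] lemma pairHom_apply (x y : Fin m → ZMod 2) (M : Matrix (Fin m) (Fin n) (ZMod 2)) :
    pairHom x y M = (vm x M, vm y M) := rfl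

lemma z2cancel : ∀ a b : ZMod 2, a + b = 0 → a = b := by decide

lemma count_comp' {G H : Type*} [AddCommGroup G] [AddCommGroup H] [Fintype G] [Fintype H]
    [DecidableEq H] (φ : G →+ H) (P : H → Prop) [DecidablePred P]
    (p : G → Prop) [DecidablePred p] (hp : ∀ a, p a ↔ P (φ a))
    (W : H → Prop) [DecidablePred W] (hW : ∀ h, W h ↔ (P h ∧ ∃ a, φ a = h)) :
    (univ.filter p).card = (univ.filter W).card * (univ.filter fun a => φ a = 0).card := by
  rw [Finset.filter_congr (fun a (_ : a ∈ univ) => hp a),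
    Finset.filter_congr (fun h (_ : h ∈ univ) => hW h)]
  exact count_comp φ P

lemma tot_identity (R : Rsp m n) :
    ∑ j, patternSum X f (rowA (X j) R) = ∑ j, patternSum X f (colA (X j) R) := by
  have h1 : ∀ j, patternSum X f (rowA (X j) R) = ∑ i, f (vm (X j) (colA (X i) R)) := by
    intro j
    rw [patternSum_eq]
    exact Finset.sum_congr rfl fun i _ => by rw [vm_rowA]
  have h2 : ∀ j, patternSum X f (colA (X j) R) = ∑ i, f (vm (X i) (colA (X j) R)) :=
    fun j => patternSum_eq X _ _
  rw [Finset.sum_congr rfl fun j _ => h1 j, Finset.sum_congr rfl fun j _ => h2 j,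
    Finset.sum_comm]

lemma disagree_exists (R : Rsp m n)
    (hdis : voteF X f (rowA (X 0) R) ≠ voteF X f (colA (X 0) R)) :
    ∃ j, j ≠ 0 ∧ (patternSum X f (rowA (X j) R) = 1
      ∨ patternSum X f (colA (X j) R) = 1) := by
  by_contra hcon
  push_neg at hcon
  have hzero : ∀ j ∈ univ.erase (0 : Fin ℓ),
      patternSum X f (rowA (X j) R) + patternSum X f (colA (X j) R) = 0 := by
    intro j hj
    have hj0 : j ≠ 0 := (Finset.mem_erase.mp hj).1
    obtain ⟨hr, hc⟩ := hcon j hj0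
    rw [z2nz' _ hr, z2nz' _ hc, add_zero]
  -- abbreviations
  set A := patternSum X f (rowA (X 0) R) with hA
  set B := patternSum X f (colA (X 0) R) with hB
  set SR := ∑ j ∈ univ.erase (0 : Fin ℓ), patternSum X f (rowA (X j) R) with hSR
  set SC := ∑ j ∈ univ.erase (0 : Fin ℓ), patternSum X f (colA (X j) R) with hSC
  have hid : A + SR = B + SC := by
    rw [hA, hSR, hB, hSC,
      Finset.add_sum_erase univ (fun j => patternSum X f (rowA (X j) R))
        (mem_univ (0 : Fin ℓ)),
      Finset.add_sum_erase univ (fun j => patternSum X f (colA (X j) R))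
        (mem_univ (0 : Fin ℓ))]
    exact tot_identity X f R
  have hAB : A + B = SR + SC := by
    apply z2cancel
    have hrearr : A + B + (SR + SC) = (A + SR) + (B + SC) := by ring
    rw [hrearr, hid, z2addself]
  have hSRSC : SR + SC = 0 := by
    rw [hSR, hSC, ← Finset.sum_add_distrib]
    exact Finset.sum_eq_zero hzero
  -- voteF sum
  have hvv : voteF X f (rowA (X 0) R) + voteF X f (colA (X 0) R) = A + B := by
    unfold voteF
    rw [vm_rowA (X 0) (X 0) R]
    set c := f (vm (X 0) (colA (X 0) R))
    have : A + c + (B + c) = (A + B) + (c + c) := by ring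
    rw [this, z2addself, add_zero]
  have h1 : voteF X f (rowA (X 0) R) + voteF X f (colA (X 0) R) = 1 := z2ne1 _ _ hdis
  rw [hvv, hAB, hSRSC] at h1
  exact absurd h1 (by decide)

lemma Sx_split (x : Fin n → ZMod 2) :
    (univ.filter fun M : Matrix (Fin m) (Fin n) (ZMod 2) => vm (X 0) M = x).card
      = Ncnt X f 0 x + Ncnt X f 1 x := by
  unfold Ncnt
  rw [← Finset.card_union_of_disjoint]
  · congr 1
    ext M
    simp only [mem_union, mem_filter, mem_univ, true_and]
    constructor
    · intro h
      rcases z2em (voteF X f M) with h0 | h1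
      · exact Or.inl ⟨h, h0⟩
      · exact Or.inr ⟨h, h1⟩
    · rintro (⟨h, -⟩ | ⟨h, -⟩) <;> exact h
  · rw [Finset.disjoint_left]
    intro M hM0 hM1
    rw [Finset.mem_filter] at hM0 hM1
    exact absurd (hM0.2.2.symm.trans hM1.2.2) (by decide)

lemma claimA (hnz : ∀ i, X i ≠ 0) (hinj : Function.Injective X) (hl : 3 ≤ ℓ)
    (x : Fin n → ZMod 2) :
    mu X f x * 2 ^ n ≤ 2 * (ℓ - 1) * rhoCnt X f := by
  classical
  have h01 : (0 : Fin ℓ) ≠ (1 : Fin ℓ) := by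
    have h2 : (1 : Fin ℓ).val = 1 % ℓ := rfl
    have h0 : (0 : Fin ℓ).val = 0 % ℓ := rfl
    have h3 : 1 % ℓ = 1 := Nat.mod_eq_of_lt (by omega)
    intro hh
    have := congrArg Fin.val hh
    rw [h0, h2, h3] at this
    simp at this
  set Fp : ℕ := (univ.filter fun M : Matrix (Fin m) (Fin n) (ZMod 2) =>
      vm (X 0) M = x ∧ vm (X 1) M = 0).card with hFpdef
  have hFpq : Fp * (2 ^ n * 2 ^ n) = (2 ^ n) ^ m :=
    pair_fiber_card _ _ (hnz 0) (hnz 1) (fun h => h01 (hinj h)) x 0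
  have hFp : ∀ j : Fin ℓ, j ≠ 0 → ∀ c : Fin n → ZMod 2,
      (univ.filter fun M : Matrix (Fin m) (Fin n) (ZMod 2) =>
        vm (X 0) M = x ∧ vm (X j) M = c).card = Fp := by
    intro j hj c
    have h := pair_fiber_card (X 0) (X j) (hnz 0) (hnz j)
      (fun h => hj (hinj h).symm) x c
    exact Nat.eq_of_mul_eq_mul_right (by positivity) (h.trans hFpq.symm)
  set κ : ℕ := (univ.filter fun R : Rsp m n => rowColHom (X 0) (X 0) R = 0).card with hκdef
  have hκrel : κ * ((2 ^ n) ^ m * (2 ^ n) ^ m) = Fintype.card (Rsp m n) * 2 ^ n :=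
    ker_rowCol _ _ (hnz 0) (hnz 0)
  have hκpos : 0 < κ := by
    rcases Nat.eq_zero_or_pos κ with h | h
    · rw [h, zero_mul] at hκrel
      have h2 : 0 < Fintype.card (Rsp m n) * 2 ^ n := by
        have := Fintype.card_pos (α := Rsp m n)
        positivity
      omega
    · exact h
  have hκeq : ∀ y z : Fin m → ZMod 2, y ≠ 0 → z ≠ 0 →
      (univ.filter fun R : Rsp m n => rowColHom y z R = 0).card = κ := by
    intro y z hy hz
    exact Nat.eq_of_mul_eq_mul_right (by positivity)
      ((ker_rowCol y z hy hz).trans hκrel.symm)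
  -- the disagreement count over R
  have hWdis : (univ.filter fun p : Matrix (Fin m) (Fin n) (ZMod 2)
        × Matrix (Fin m) (Fin n) (ZMod 2) =>
      (vm (X 0) p.2 = x ∧ voteF X f p.1 ≠ voteF X f p.2)
        ∧ ∃ a, rowColHom (X 0) (X 0) a = p).card
      = Ncnt X f 0 x * Ncnt X f 1 x + Ncnt X f 1 x * Ncnt X f 0 x := by
    have hset : (univ.filter fun p : Matrix (Fin m) (Fin n) (ZMod 2)
          × Matrix (Fin m) (Fin n) (ZMod 2) =>
        (vm (X 0) p.2 = x ∧ voteF X f p.1 ≠ voteF X f p.2)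
          ∧ ∃ a, rowColHom (X 0) (X 0) a = p)
        = (univ.filter fun p : Matrix (Fin m) (Fin n) (ZMod 2)
            × Matrix (Fin m) (Fin n) (ZMod 2) =>
            (vm (X 0) p.1 = x ∧ voteF X f p.1 = 0) ∧ (vm (X 0) p.2 = x ∧ voteF X f p.2 = 1))
          ∪ (univ.filter fun p : Matrix (Fin m) (Fin n) (ZMod 2)
            × Matrix (Fin m) (Fin n) (ZMod 2) =>
            (vm (X 0) p.1 = x ∧ voteF X f p.1 = 1) ∧ (vm (X 0) p.2 = x ∧ voteF X f p.2 = 0)) := by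
      ext p
      simp only [mem_filter, mem_union, mem_univ, true_and]
      constructor
      · rintro ⟨⟨h2, hne⟩, hr⟩
        have h12 : vm (X 0) p.1 = vm (X 0) p.2 := (rowCol_range _ _ (hnz 0) (hnz 0) p).mp hr
        have h1 : vm (X 0) p.1 = x := h12.trans h2
        rcases z2em (voteF X f p.1) with ha | ha <;> rcases z2em (voteF X f p.2) with hb | hb
        · exact absurd (ha.trans hb.symm) hne
        · exact Or.inl ⟨⟨h1, ha⟩, h2, hb⟩
        · exact Or.inr ⟨⟨h1, ha⟩, h2, hb⟩
        · exact absurd (ha.trans hb.symm) hne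
      · rintro (⟨⟨h1, ha⟩, h2, hb⟩ | ⟨⟨h1, ha⟩, h2, hb⟩) <;>
        · refine ⟨⟨h2, ?_⟩, (rowCol_range _ _ (hnz 0) (hnz 0) p).mpr (h1.trans h2.symm)⟩
          rw [ha, hb]
          decide
    rw [hset, Finset.card_union_of_disjoint,
      card_filter_prod (fun M => vm (X 0) M = x ∧ voteF X f M = 0)
        (fun M => vm (X 0) M = x ∧ voteF X f M = 1),
      card_filter_prod (fun M => vm (X 0) M = x ∧ voteF X f M = 1)
        (fun M => vm (X 0) M = x ∧ voteF X f M = 0)]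
    · rfl
    · rw [Finset.disjoint_left]
      intro p hp hp'
      rw [mem_filter] at hp hp'
      exact absurd (hp.2.1.2.symm.trans hp'.2.1.2) (by decide)
  have hBrs : (univ.filter fun R : Rsp m n =>
        vm (X 0) (colA (X 0) R) = x
          ∧ voteF X f (rowA (X 0) R) ≠ voteF X f (colA (X 0) R)).card
      = (Ncnt X f 0 x * Ncnt X f 1 x + Ncnt X f 1 x * Ncnt X f 0 x) * κ := by
    have h := count_comp' (rowColHom (X 0) (X 0))
      (fun p => vm (X 0) p.2 = x ∧ voteF X f p.1 ≠ voteF X f p.2)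
      (fun R : Rsp m n => vm (X 0) (colA (X 0) R) = x
        ∧ voteF X f (rowA (X 0) R) ≠ voteF X f (colA (X 0) R))
      (fun R => Iff.rfl)
      (fun p => (vm (X 0) p.2 = x ∧ voteF X f p.1 ≠ voteF X f p.2)
        ∧ ∃ a, rowColHom (X 0) (X 0) a = p)
      (fun p => Iff.rfl)
    rw [h, hWdis]
  have hrow : ∀ j : Fin ℓ, j ≠ 0 →
      (univ.filter fun R : Rsp m n =>
        vm (X 0) (colA (X 0) R) = x ∧ patternSum X f (rowA (X j) R) = 1).card
      = rhoCnt X f * Fp * κ := by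
    intro j hj
    have h := count_comp' (rowColHom (X j) (X 0))
      (fun p => vm (X 0) p.2 = x ∧ patternSum X f p.1 = 1)
      (fun R : Rsp m n =>
        vm (X 0) (colA (X 0) R) = x ∧ patternSum X f (rowA (X j) R) = 1)
      (fun R => Iff.rfl)
      (fun p => patternSum X f p.1 = 1
        ∧ (vm (X 0) p.2 = x ∧ vm (X j) p.2 = vm (X 0) p.1))
      (fun p => by
        have hr := rowCol_range (X j) (X 0) (hnz j) (hnz 0) p
        constructor
        · rintro ⟨h1, h2, h3⟩; exact ⟨⟨h2, h1⟩, hr.mpr h3.symm⟩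
        · rintro ⟨⟨h2, h1⟩, h3⟩; exact ⟨h1, h2, (hr.mp h3).symm⟩)
    rw [h, hκeq (X j) (X 0) (hnz j) (hnz 0),
      card_prod_dep (fun M => patternSum X f M = 1)
        (fun M M' => vm (X 0) M' = x ∧ vm (X j) M' = vm (X 0) M) Fp
        (fun M _ => hFp j hj (vm (X 0) M))]
    rfl
  have hcol : ∀ j : Fin ℓ, j ≠ 0 →
      (univ.filter fun R : Rsp m n =>
        vm (X 0) (colA (X 0) R) = x ∧ patternSum X f (colA (X j) R) = 1).card
      = rhoCnt X f * Fp * κ := by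
    intro j hj
    have hswap : (univ.filter fun R : Rsp m n =>
        vm (X 0) (colA (X 0) R) = x ∧ patternSum X f (colA (X j) R) = 1)
        = (univ.filter fun R : Rsp m n =>
        vm (X 0) (rowA (X 0) R) = x ∧ patternSum X f (colA (X j) R) = 1) := by
      apply Finset.filter_congr
      intro R _
      rw [vm_rowA]
    have h := count_comp' (rowColHom (X 0) (X j))
      (fun p => vm (X 0) p.1 = x ∧ patternSum X f p.2 = 1)
      (fun R : Rsp m n =>
        vm (X 0) (rowA (X 0) R) = x ∧ patternSum X f (colA (X j) R) = 1)
      (fun R => Iff.rfl)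
      (fun p => patternSum X f p.2 = 1
        ∧ (vm (X 0) p.1 = x ∧ vm (X j) p.1 = vm (X 0) p.2))
      (fun p => by
        have hr := rowCol_range (X 0) (X j) (hnz 0) (hnz j) p
        constructor
        · rintro ⟨h1, h2, h3⟩; exact ⟨⟨h2, h1⟩, hr.mpr h3⟩
        · rintro ⟨⟨h2, h1⟩, h3⟩; exact ⟨h1, h2, hr.mp h3⟩)
    rw [hswap, h, hκeq (X 0) (X j) (hnz 0) (hnz j),
      card_prod_dep' (fun M' => patternSum X f M' = 1)
        (fun M' M => vm (X 0) M = x ∧ vm (X j) M = vm (X 0) M') Fp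
        (fun M' _ => hFp j hj (vm (X 0) M'))]
    rfl
  -- union bound
  have hsub : (univ.filter fun R : Rsp m n =>
        vm (X 0) (colA (X 0) R) = x
          ∧ voteF X f (rowA (X 0) R) ≠ voteF X f (colA (X 0) R))
      ⊆ (univ.erase (0 : Fin ℓ)).biUnion (fun j => univ.filter fun R : Rsp m n =>
          (vm (X 0) (colA (X 0) R) = x ∧ patternSum X f (rowA (X j) R) = 1)
          ∨ (vm (X 0) (colA (X 0) R) = x ∧ patternSum X f (colA (X j) R) = 1)) := by
    intro R hR
    rw [mem_filter] at hR
    obtain ⟨-, hcond, hdis⟩ := hR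
    obtain ⟨j, hj0, hj⟩ := disagree_exists X f R hdis
    rw [Finset.mem_biUnion]
    exact ⟨j, Finset.mem_erase.mpr ⟨hj0, mem_univ j⟩,
      mem_filter.mpr ⟨mem_univ R, hj.imp (fun h => ⟨hcond, h⟩) (fun h => ⟨hcond, h⟩)⟩⟩
  have hbound : (Ncnt X f 0 x * Ncnt X f 1 x + Ncnt X f 1 x * Ncnt X f 0 x) * κ
      ≤ (ℓ - 1) * (2 * (rhoCnt X f * Fp * κ)) := by
    rw [← hBrs]
    refine (Finset.card_le_card hsub).trans ?_
    refine Finset.card_biUnion_le.trans ?_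
    have hper : ∀ j ∈ univ.erase (0 : Fin ℓ),
        (univ.filter fun R : Rsp m n =>
          (vm (X 0) (colA (X 0) R) = x ∧ patternSum X f (rowA (X j) R) = 1)
          ∨ (vm (X 0) (colA (X 0) R) = x ∧ patternSum X f (colA (X j) R) = 1)).card
        ≤ 2 * (rhoCnt X f * Fp * κ) := by
      intro j hj
      have hj0 := (Finset.mem_erase.mp hj).1
      rw [Finset.filter_or]
      refine (Finset.card_union_le _ _).trans ?_
      rw [hrow j hj0, hcol j hj0]
      omega
    refine (Finset.sum_le_sum hper).trans ?_
    rw [Finset.sum_const, smul_eq_mul, Finset.card_erase_of_mem (mem_univ _),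
      Finset.card_univ, Fintype.card_fin]
  have hNN : Ncnt X f 0 x * Ncnt X f 1 x + Ncnt X f 1 x * Ncnt X f 0 x
      ≤ 2 * (ℓ - 1) * (rhoCnt X f * Fp) := by
    refine Nat.le_of_mul_le_mul_right ?_ hκpos
    refine hbound.trans (le_of_eq ?_)
    ring
  have hmuNN : mu X f x
        * (univ.filter fun M : Matrix (Fin m) (Fin n) (ZMod 2) => vm (X 0) M = x).card
      ≤ Ncnt X f 0 x * Ncnt X f 1 x + Ncnt X f 1 x * Ncnt X f 0 x := by
    rw [Sx_split X f x, Nat.mul_add]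
    have h1 : mu X f x * Ncnt X f 0 x ≤ Ncnt X f 1 x * Ncnt X f 0 x :=
      Nat.mul_le_mul_right _ (min_le_right _ _)
    have h2 : mu X f x * Ncnt X f 1 x ≤ Ncnt X f 0 x * Ncnt X f 1 x :=
      Nat.mul_le_mul_right _ (min_le_left _ _)
    calc mu X f x * Ncnt X f 0 x + mu X f x * Ncnt X f 1 x
        ≤ Ncnt X f 1 x * Ncnt X f 0 x + Ncnt X f 0 x * Ncnt X f 1 x :=
          Nat.add_le_add h1 h2
      _ = Ncnt X f 0 x * Ncnt X f 1 x + Ncnt X f 1 x * Ncnt X f 0 x := by ring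
  have hS := Sx_card X (hnz 0) x
  have final : (mu X f x * 2 ^ n) * (2 ^ n) ^ m
      ≤ (2 * (ℓ - 1) * rhoCnt X f) * (2 ^ n) ^ m := by
    calc (mu X f x * 2 ^ n) * (2 ^ n) ^ m
        = (mu X f x
            * (univ.filter fun M : Matrix (Fin m) (Fin n) (ZMod 2) => vm (X 0) M = x).card)
            * (2 ^ n * 2 ^ n) := by rw [← hS]; ring
      _ ≤ (2 * (ℓ - 1) * (rhoCnt X f * Fp)) * (2 ^ n * 2 ^ n) :=
          Nat.mul_le_mul_right _ (hmuNN.trans hNN)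
      _ = (2 * (ℓ - 1) * rhoCnt X f) * (Fp * (2 ^ n * 2 ^ n)) := by ring
      _ = (2 * (ℓ - 1) * rhoCnt X f) * (2 ^ n) ^ m := by rw [hFpq]
  exact Nat.le_of_mul_le_mul_right final (by positivity)

lemma claimB (hnz : ∀ i, X i ≠ 0) :
    (univ.filter fun v : Fin n → ZMod 2 => gfun X f v ≠ f v).card * (2 ^ n) ^ m
      ≤ 2 * rhoCnt X f * 2 ^ n := by
  classical
  have hpart : rhoCnt X f = ∑ v : Fin n → ZMod 2,
      ((univ.filter fun M : Matrix (Fin m) (Fin n) (ZMod 2) =>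
        patternSum X f M = 1).filter fun M => vm (X 0) M = v).card := by
    unfold rhoCnt
    rw [Finset.card_eq_sum_card_fiberwise (f := fun M => vm (X 0) M) (t := univ)
      (fun M _ => mem_univ _)]
  have htau : ∀ v, gfun X f v ≠ f v →
      Ncnt X f 0 v + Ncnt X f 1 v
        ≤ 2 * ((univ.filter fun M : Matrix (Fin m) (Fin n) (ZMod 2) =>
            patternSum X f M = 1).filter fun M => vm (X 0) M = v).card := by
    intro v hbad
    have hfe : ((univ.filter fun M : Matrix (Fin m) (Fin n) (ZMod 2) =>
          patternSum X f M = 1).filter fun M => vm (X 0) M = v)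
        = univ.filter fun M => vm (X 0) M = v ∧ voteF X f M = 1 + f v := by
      ext M
      simp only [mem_filter, mem_univ, true_and]
      constructor
      · rintro ⟨hT, hv⟩
        refine ⟨hv, ?_⟩
        show patternSum X f M + f (vm (X 0) M) = 1 + f v
        rw [hT, hv]
      · rintro ⟨hv, hV⟩
        refine ⟨?_, hv⟩
        have h2 : patternSum X f M + f (vm (X 0) M) = 1 + f v := hV
        rw [hv] at h2
        exact add_right_cancel h2
    rw [hfe]
    by_cases hN : Ncnt X f 0 v < Ncnt X f 1 v
    · have hg : gfun X f v = 1 := if_pos hN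
      have hf0 : f v = 0 := by
        rcases z2em (f v) with h | h
        · exact h
        · exact absurd (hg.trans h.symm) hbad
      have h1 : (1 : ZMod 2) + f v = 1 := by rw [hf0, add_zero]
      rw [h1]
      show Ncnt X f 0 v + Ncnt X f 1 v ≤ 2 * Ncnt X f 1 v
      omega
    · have hg : gfun X f v = 0 := if_neg hN
      have hf1 : f v = 1 := by
        rcases z2em (f v) with h | h
        · exact absurd (hg.trans h.symm) hbad
        · exact h
      have h1 : (1 : ZMod 2) + f v = 0 := by rw [hf1]; decide
      rw [h1]
      show Ncnt X f 0 v + Ncnt X f 1 v ≤ 2 * Ncnt X f 0 v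
      omega
  have h1 : ∀ v ∈ (univ.filter fun v : Fin n → ZMod 2 => gfun X f v ≠ f v),
      ((2:ℕ) ^ n) ^ m ≤ 2 * ((univ.filter fun M : Matrix (Fin m) (Fin n) (ZMod 2) =>
          patternSum X f M = 1).filter fun M => vm (X 0) M = v).card * 2 ^ n := by
    intro v hv
    rw [mem_filter] at hv
    have h2 := htau v hv.2
    have h3 : (univ.filter fun M : Matrix (Fin m) (Fin n) (ZMod 2) =>
        vm (X 0) M = v).card = Ncnt X f 0 v + Ncnt X f 1 v := Sx_split X f v
    have h4 := Sx_card X (hnz 0) v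
    calc ((2:ℕ) ^ n) ^ m
        = (univ.filter fun M : Matrix (Fin m) (Fin n) (ZMod 2) =>
            vm (X 0) M = v).card * 2 ^ n := h4.symm
      _ ≤ _ := Nat.mul_le_mul_right _ (by rw [h3]; exact h2)
  calc (univ.filter fun v : Fin n → ZMod 2 => gfun X f v ≠ f v).card * (2 ^ n) ^ m
      = ∑ _v ∈ (univ.filter fun v : Fin n → ZMod 2 => gfun X f v ≠ f v),
          ((2:ℕ) ^ n) ^ m := by rw [Finset.sum_const, smul_eq_mul]
    _ ≤ ∑ v ∈ (univ.filter fun v : Fin n → ZMod 2 => gfun X f v ≠ f v),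
          2 * ((univ.filter fun M : Matrix (Fin m) (Fin n) (ZMod 2) =>
            patternSum X f M = 1).filter fun M => vm (X 0) M = v).card * 2 ^ n :=
        Finset.sum_le_sum h1
    _ ≤ ∑ v : Fin n → ZMod 2,
          2 * ((univ.filter fun M : Matrix (Fin m) (Fin n) (ZMod 2) =>
            patternSum X f M = 1).filter fun M => vm (X 0) M = v).card * 2 ^ n :=
        Finset.sum_le_sum_of_subset (Finset.subset_univ _)
    _ = 2 * rhoCnt X f * 2 ^ n := by
        rw [hpart, Finset.mul_sum, Finset.sum_mul]

lemma mu_eq (z : Fin n → ZMod 2) :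
    (univ.filter fun M : Matrix (Fin m) (Fin n) (ZMod 2) =>
      vm (X 0) M = z ∧ voteF X f M ≠ gfun X f z).card = mu X f z := by
  unfold gfun mu
  by_cases hN : Ncnt X f 0 z < Ncnt X f 1 z
  · rw [if_pos hN, min_eq_left (le_of_lt hN)]
    have hfe : (univ.filter fun M : Matrix (Fin m) (Fin n) (ZMod 2) =>
        vm (X 0) M = z ∧ voteF X f M ≠ 1)
        = univ.filter fun M => vm (X 0) M = z ∧ voteF X f M = 0 := by
      apply Finset.filter_congr
      intro M _
      constructor
      · rintro ⟨h1, h2⟩; exact ⟨h1, z2nz' _ h2⟩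
      · rintro ⟨h1, h2⟩; exact ⟨h1, by rw [h2]; decide⟩
    rw [hfe]
    rfl
  · rw [if_neg hN, min_eq_right (not_lt.mp hN)]
    have hfe : (univ.filter fun M : Matrix (Fin m) (Fin n) (ZMod 2) =>
        vm (X 0) M = z ∧ voteF X f M ≠ 0)
        = univ.filter fun M => vm (X 0) M = z ∧ voteF X f M = 1 := by
      apply Finset.filter_congr
      intro M _
      constructor
      · rintro ⟨h1, h2⟩; exact ⟨h1, z2nz _ h2⟩
      · rintro ⟨h1, h2⟩; exact ⟨h1, by rw [h2]; decide⟩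
    rw [hfe]
    rfl

lemma claimC (hnz : ∀ i, X i ≠ 0) (hinj : Function.Injective X) (hl : 3 ≤ ℓ)
    (hsmall : 2 * ℓ ^ 2 * rhoCnt X f < (2 ^ n) ^ m)
    (M₀ : Matrix (Fin m) (Fin n) (ZMod 2)) :
    patternSum X (gfun X f) M₀ = 0 := by
  classical
  have hDpos : 0 < (2:ℕ) ^ n := by positivity
  have hRTpos : 0 < Fintype.card (Rsp m n) := Fintype.card_pos
  -- kernel counts
  set κr : ℕ := (univ.filter fun R : Rsp m n => rowColHom (X 0) (X 0) R = 0).card with hκrdef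
  have hκrrel : κr * ((2 ^ n) ^ m * (2 ^ n) ^ m) = Fintype.card (Rsp m n) * 2 ^ n :=
    ker_rowCol _ _ (hnz 0) (hnz 0)
  have hκreq : ∀ i : Fin ℓ,
      (univ.filter fun R : Rsp m n => rowColHom (X i) (X 0) R = 0).card = κr := by
    intro i
    exact Nat.eq_of_mul_eq_mul_right (by positivity)
      ((ker_rowCol (X i) (X 0) (hnz i) (hnz 0)).trans hκrrel.symm)
  -- good R existence
  have hB1 : ∀ i : Fin ℓ,
      (univ.filter fun R : Rsp m n => colA (X 0) R = M₀
        ∧ voteF X f (rowA (X i) R) ≠ gfun X f (vm (X i) M₀)).card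
      = mu X f (vm (X i) M₀) * κr := by
    intro i
    have h := count_comp' (rowColHom (X i) (X 0))
      (fun p => p.2 = M₀ ∧ voteF X f p.1 ≠ gfun X f (vm (X i) M₀))
      (fun R : Rsp m n => colA (X 0) R = M₀
        ∧ voteF X f (rowA (X i) R) ≠ gfun X f (vm (X i) M₀))
      (fun R => Iff.rfl)
      (fun p => p.2 = M₀
        ∧ (vm (X 0) p.1 = vm (X i) M₀ ∧ voteF X f p.1 ≠ gfun X f (vm (X i) M₀)))
      (fun p => by
        have hr := rowCol_range (X i) (X 0) (hnz i) (hnz 0) p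
        constructor
        · rintro ⟨h1, h2, h3⟩
          exact ⟨⟨h1, h3⟩, hr.mpr (by rw [h2, h1])⟩
        · rintro ⟨⟨h1, h3⟩, h4⟩
          have h5 := hr.mp h4
          rw [h1] at h5
          exact ⟨h1, h5, h3⟩)
    rw [h, hκreq i,
      card_prod_right_eq (fun M : Matrix (Fin m) (Fin n) (ZMod 2) =>
        vm (X 0) M = vm (X i) M₀ ∧ voteF X f M ≠ gfun X f (vm (X i) M₀)) M₀,
      mu_eq X f (vm (X i) M₀)]
  set κz : ℕ := (univ.filter fun R : Rsp m n => colColHom (X 1) (X 0) R = 0).card with hκzdef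
  have h01 : (0 : Fin ℓ) ≠ (1 : Fin ℓ) := by
    have h2 : (1 : Fin ℓ).val = 1 % ℓ := rfl
    have h0 : (0 : Fin ℓ).val = 0 % ℓ := rfl
    have h3 : 1 % ℓ = 1 := Nat.mod_eq_of_lt (by omega)
    intro hh
    have := congrArg Fin.val hh
    rw [h0, h2, h3] at this
    simp at this
  have hκzrel : κz * ((2 ^ n) ^ m * (2 ^ n) ^ m) = Fintype.card (Rsp m n) :=
    ker_colCol _ _ (hnz 1) (hnz 0) (fun h => h01 (hinj h).symm)
  have hκzeq : ∀ j : Fin ℓ, j ≠ 0 →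
      (univ.filter fun R : Rsp m n => colColHom (X j) (X 0) R = 0).card = κz := by
    intro j hj
    exact Nat.eq_of_mul_eq_mul_right (by positivity)
      ((ker_colCol (X j) (X 0) (hnz j) (hnz 0) (fun h => hj (hinj h))).trans
        hκzrel.symm)
  have hB2 : ∀ j : Fin ℓ, j ≠ 0 →
      (univ.filter fun R : Rsp m n => colA (X 0) R = M₀
        ∧ patternSum X f (colA (X j) R) = 1).card
      = rhoCnt X f * κz := by
    intro j hj
    have hs := colColHom_surj (n := n) (X j) (X 0) (hnz j) (hnz 0)
      (fun h => hj (hinj h))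
    have h := count_comp' (colColHom (X j) (X 0))
      (fun p => p.2 = M₀ ∧ patternSum X f p.1 = 1)
      (fun R : Rsp m n => colA (X 0) R = M₀ ∧ patternSum X f (colA (X j) R) = 1)
      (fun R => by
        constructor
        · rintro ⟨h1, h2⟩; exact ⟨h1, h2⟩
        · rintro ⟨h1, h2⟩; exact ⟨h1, h2⟩)
      (fun p => p.2 = M₀ ∧ patternSum X f p.1 = 1)
      (fun p => ⟨fun hh => ⟨hh, hs p⟩, fun hh => hh.1⟩)
    rw [h, hκzeq j hj,
      card_prod_right_eq (fun M : Matrix (Fin m) (Fin n) (ZMod 2) =>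
        patternSum X f M = 1) M₀]
    rfl
  set κc : ℕ := (univ.filter fun R : Rsp m n => colA (X 0) R = M₀).card with hκcdef
  have hκcrel : κc * (2 ^ n) ^ m = Fintype.card (Rsp m n) := by
    have h := count_comp' (colHom (X 0)) (fun M => M = M₀)
      (fun R : Rsp m n => colA (X 0) R = M₀) (fun R => Iff.rfl)
      (fun M => M = M₀)
      (fun M => ⟨fun hh => ⟨hh, colHom_surj (X 0) (hnz 0) M⟩, fun hh => hh.1⟩)
    have h2 : (univ.filter fun M : Matrix (Fin m) (Fin n) (ZMod 2) => M = M₀).card = 1 := by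
      rw [Finset.filter_eq']
      simp
    rw [h2, one_mul] at h
    rw [hκcdef, h]
    exact ker_col (X 0) (hnz 0)
  -- arithmetic: total bad < κc
  have hmusum : ∀ i : Fin ℓ, mu X f (vm (X i) M₀) * 2 ^ n ≤ 2 * (ℓ - 1) * rhoCnt X f :=
    fun i => claimA X f hnz hinj hl (vm (X i) M₀)
  have hγ : (∑ i : Fin ℓ, mu X f (vm (X i) M₀)) * 2 ^ n + (ℓ - 1) * rhoCnt X f
      < (2 ^ n) ^ m := by
    have h1 : (∑ i : Fin ℓ, mu X f (vm (X i) M₀)) * 2 ^ n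
        ≤ ℓ * (2 * (ℓ - 1) * rhoCnt X f) := by
      rw [Finset.sum_mul]
      calc ∑ i : Fin ℓ, mu X f (vm (X i) M₀) * 2 ^ n
          ≤ ∑ _i : Fin ℓ, 2 * (ℓ - 1) * rhoCnt X f :=
            Finset.sum_le_sum fun i _ => hmusum i
        _ = ℓ * (2 * (ℓ - 1) * rhoCnt X f) := by
            rw [Finset.sum_const, Finset.card_univ, Fintype.card_fin, smul_eq_mul]
    have h2 : ℓ * (2 * (ℓ - 1) * rhoCnt X f) + (ℓ - 1) * rhoCnt X f
        ≤ 2 * ℓ ^ 2 * rhoCnt X f := by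
      obtain ⟨L, rfl⟩ : ∃ L, ℓ = L + 1 := ⟨ℓ - 1, by omega⟩
      have hL1 : L + 1 - 1 = L := by omega
      rw [hL1]
      nlinarith [Nat.zero_le (rhoCnt X f), Nat.zero_le L]
    calc (∑ i : Fin ℓ, mu X f (vm (X i) M₀)) * 2 ^ n + (ℓ - 1) * rhoCnt X f
        ≤ ℓ * (2 * (ℓ - 1) * rhoCnt X f) + (ℓ - 1) * rhoCnt X f :=
          Nat.add_le_add_right h1 _
      _ ≤ 2 * ℓ ^ 2 * rhoCnt X f := h2
      _ < (2 ^ n) ^ m := hsmall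
  have hstrict : (∑ i : Fin ℓ, mu X f (vm (X i) M₀) * κr)
        + (ℓ - 1) * (rhoCnt X f * κz) < κc := by
    have hmul : ((∑ i : Fin ℓ, mu X f (vm (X i) M₀) * κr)
          + (ℓ - 1) * (rhoCnt X f * κz)) * ((2 ^ n) ^ m * (2 ^ n) ^ m)
        < κc * ((2 ^ n) ^ m * (2 ^ n) ^ m) := by
      have expand : ((∑ i : Fin ℓ, mu X f (vm (X i) M₀) * κr)
            + (ℓ - 1) * (rhoCnt X f * κz)) * ((2 ^ n) ^ m * (2 ^ n) ^ m)
          = (∑ i : Fin ℓ, mu X f (vm (X i) M₀)) * (κr * ((2 ^ n) ^ m * (2 ^ n) ^ m))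
            + (ℓ - 1) * rhoCnt X f * (κz * ((2 ^ n) ^ m * (2 ^ n) ^ m)) := by
        rw [← Finset.sum_mul]
        ring
      have e3 : κc * ((2 ^ n) ^ m * (2 ^ n) ^ m)
          = Fintype.card (Rsp m n) * (2 ^ n) ^ m := by
        rw [← mul_assoc, hκcrel]
      rw [expand, hκrrel, hκzrel, e3]
      calc (∑ i : Fin ℓ, mu X f (vm (X i) M₀)) * (Fintype.card (Rsp m n) * 2 ^ n)
            + (ℓ - 1) * rhoCnt X f * Fintype.card (Rsp m n)
          = ((∑ i : Fin ℓ, mu X f (vm (X i) M₀)) * 2 ^ n + (ℓ - 1) * rhoCnt X f)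
            * Fintype.card (Rsp m n) := by ring
        _ < (2 ^ n) ^ m * Fintype.card (Rsp m n) :=
            mul_lt_mul_of_pos_right hγ hRTpos
        _ = Fintype.card (Rsp m n) * (2 ^ n) ^ m := by ring
    exact lt_of_mul_lt_mul_right hmul (Nat.zero_le _)
  -- existence of a good R
  set bigU := ((univ : Finset (Fin ℓ)).biUnion (fun i =>
        univ.filter fun R : Rsp m n => colA (X 0) R = M₀
          ∧ voteF X f (rowA (X i) R) ≠ gfun X f (vm (X i) M₀)))
      ∪ ((univ.erase (0 : Fin ℓ)).biUnion (fun j =>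
        univ.filter fun R : Rsp m n => colA (X 0) R = M₀
          ∧ patternSum X f (colA (X j) R) = 1)) with hbigU
  have hlt2 : bigU.card < κc := by
    refine lt_of_le_of_lt ?_ hstrict
    rw [hbigU]
    refine (Finset.card_union_le _ _).trans ?_
    refine Nat.add_le_add ?_ ?_
    · refine Finset.card_biUnion_le.trans ?_
      exact le_of_eq (Finset.sum_congr rfl fun i _ => hB1 i)
    · refine Finset.card_biUnion_le.trans (le_of_eq ?_)
      rw [Finset.sum_congr rfl fun j hj => hB2 j (Finset.mem_erase.mp hj).1,
        Finset.sum_const, smul_eq_mul, Finset.card_erase_of_mem (mem_univ _),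
        Finset.card_univ, Fintype.card_fin]
  have hex : ∃ R ∈ (univ.filter fun R : Rsp m n => colA (X 0) R = M₀), R ∉ bigU := by
    rw [← Finset.not_subset]
    intro hcon
    have hcc := Finset.card_le_card hcon
    rw [← hκcdef] at hcc
    omega
  obtain ⟨R, hRC, hRU⟩ := hex
  rw [mem_filter] at hRC
  have hCR : colA (X 0) R = M₀ := hRC.2
  have hvote : ∀ i : Fin ℓ, voteF X f (rowA (X i) R) = gfun X f (vm (X i) M₀) := by
    intro i
    by_contra hne
    exact hRU (Finset.mem_union_left _ (Finset.mem_biUnion.mpr ⟨i, mem_univ i,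
      mem_filter.mpr ⟨mem_univ R, hCR, hne⟩⟩))
  have hzero : ∀ j : Fin ℓ, j ≠ 0 → patternSum X f (colA (X j) R) = 0 := by
    intro j hj
    by_contra hne
    exact hRU (Finset.mem_union_right _ (Finset.mem_biUnion.mpr ⟨j,
      Finset.mem_erase.mpr ⟨hj, mem_univ j⟩,
      mem_filter.mpr ⟨mem_univ R, hCR, z2nz _ hne⟩⟩))
  have hsum1 : ∑ i, patternSum X f (rowA (X i) R) = patternSum X f M₀ := by
    rw [tot_identity X f R, ← Finset.add_sum_erase univ
      (fun j => patternSum X f (colA (X j) R)) (mem_univ (0 : Fin ℓ))]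
    have hz : ∑ j ∈ univ.erase (0 : Fin ℓ), patternSum X f (colA (X j) R) = 0 :=
      Finset.sum_eq_zero fun j hj => hzero j (Finset.mem_erase.mp hj).1
    rw [hz, add_zero, hCR]
  have hsum2 : ∑ i, f (vm (X 0) (rowA (X i) R)) = patternSum X f M₀ := by
    rw [patternSum_eq]
    refine Finset.sum_congr rfl fun i _ => ?_
    congr 1
    rw [vm_rowA, hCR]
  calc patternSum X (gfun X f) M₀ = ∑ i, gfun X f (vm (X i) M₀) := patternSum_eq X _ M₀
    _ = ∑ i, voteF X f (rowA (X i) R) := Finset.sum_congr rfl fun i _ => (hvote i).symm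
    _ = ∑ i, (patternSum X f (rowA (X i) R) + f (vm (X 0) (rowA (X i) R))) := rfl
    _ = (∑ i, patternSum X f (rowA (X i) R)) + ∑ i, f (vm (X 0) (rowA (X i) R)) :=
        Finset.sum_add_distrib
    _ = patternSum X f M₀ + patternSum X f M₀ := by rw [hsum1, hsum2]
    _ = 0 := z2addself _

end Main
end Stmt8

lemma realArith (l ε B P Q D : ℝ) (hl : 3 ≤ l) (hε : 0 < ε)
    (hQpos : 0 < Q) (hDpos : 0 < D) (hPnn : 0 ≤ P) (hBnn : 0 ≤ B)
    (k1 : ε * Q ≤ B) (k2 : B * D ≤ 2 * P * Q) (k3 : 2 * l ^ 2 * P < D)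
    (k4 : l * (B * D * Q) ≤ P * (Q * Q) + l * ((l - 1) * (B * B * D))) :
    l * ε / 2 * D ≤ P := by
  have hBpos : (0:ℝ) < B := lt_of_lt_of_le (mul_pos hε hQpos) k1
  have hPpos : (0:ℝ) < P := by nlinarith [mul_pos hBpos hDpos]
  have h1 : l ^ 2 * B ≤ Q := by
    have e : 2 * P * (l ^ 2 * B) ≤ 2 * P * Q := by
      nlinarith [mul_le_mul_of_nonneg_left k3.le hBnn]
    exact le_of_mul_le_mul_left e (by linarith)
  have h2 : l * ((l - 1) * B) ≤ Q := by nlinarith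
  have hA1 : l * ((l - 1) * (B * B * D)) ≤ B * D * Q := by
    nlinarith [mul_le_mul_of_nonneg_right h2 (mul_nonneg hBnn hDpos.le)]
  have hA2 : (l - 1) * (B * D * Q) ≤ P * (Q * Q) := by nlinarith
  have hA3 : l * ε / 2 * D * (Q * Q) ≤ (l - 1) * (B * D * Q) := by
    have t1 : ε * Q * (D * Q) ≤ B * (D * Q) :=
      mul_le_mul_of_nonneg_right k1 (mul_nonneg hDpos.le hQpos.le)
    have t2 : (l - 1) * (ε * Q * (D * Q)) ≤ (l - 1) * (B * (D * Q)) :=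
      mul_le_mul_of_nonneg_left t1 (by linarith)
    have t3 : l * ε / 2 * D * (Q * Q) ≤ (l - 1) * (ε * Q * (D * Q)) := by
      have h5 : l / 2 ≤ l - 1 := by linarith
      have h6 : (0:ℝ) ≤ ε * (D * (Q * Q)) := by positivity
      nlinarith [mul_le_mul_of_nonneg_right h5 h6]
    calc l * ε / 2 * D * (Q * Q) ≤ (l - 1) * (ε * Q * (D * Q)) := t3
      _ ≤ (l - 1) * (B * (D * Q)) := t2
      _ = (l - 1) * (B * D * Q) := by ring
  exact le_of_mul_le_mul_right (hA3.trans hA2) (mul_pos hQpos hQpos)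


theorem stmt_8 (d n ℓ m : ℕ) (hd : 1 ≤ d) (hn : 1 ≤ n) (hℓ : 3 ≤ ℓ) (hlm : m ≤ ℓ)
    (ε : ℝ) (hε : 0 < ε) (hε1 : ε ≤ 1)
    (X : Matrix (Fin ℓ) (Fin m) (ZMod 2))
    (hrows : Function.Injective X) (hnonzero : ∀ i, X i ≠ 0) (hrank : X.rank = m)
    (hcomplete : IsCompletePattern n d X) (hsound : IsMinimallySoundPattern n d X)
    (f : (Fin n → ZMod 2) → ZMod 2)
    (hfar : ∀ g ∈ PolyDeg n d,
      ε * 2 ^ n ≤ ((Finset.univ.filter (fun x => f x ≠ g x)).card : ℝ)) :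
    min (ℓ * ε / 2) (1 / (2 * ℓ ^ 2)) * 2 ^ (m * n) ≤
      ((Finset.univ.filter (fun M : Matrix (Fin m) (Fin n) (ZMod 2) =>
        patternSum X f M = 1)).card : ℝ) := by
  classical
  have hnez : NeZero ℓ := ⟨by omega⟩
  have hgoal : (Finset.univ.filter (fun M : Matrix (Fin m) (Fin n) (ZMod 2) =>
      patternSum X f M = 1)).card = Stmt8.rhoCnt X f := rfl
  rw [hgoal]
  have hlR : (3:ℝ) ≤ (ℓ:ℝ) := by exact_mod_cast hℓ
  have hl0 : (0:ℝ) < (ℓ:ℝ) := by linarith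
  by_cases hcase : ((2:ℕ) ^ n) ^ m ≤ 2 * ℓ ^ 2 * Stmt8.rhoCnt X f
  · have h2 : (((2:ℕ) ^ n) ^ m : ℝ) ≤ 2 * (ℓ:ℝ) ^ 2 * (Stmt8.rhoCnt X f : ℝ) := by
      have := Nat.cast_le (α := ℝ) |>.mpr hcase
      push_cast at this
      exact this
    have hρR : (2:ℝ) ^ (m * n) ≤ 2 * (ℓ:ℝ) ^ 2 * (Stmt8.rhoCnt X f : ℝ) := by
      calc (2:ℝ) ^ (m * n) = ((2:ℝ) ^ n) ^ m := by rw [← pow_mul, Nat.mul_comm]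
        _ = (((2:ℕ) ^ n) ^ m : ℝ) := by push_cast; ring
        _ ≤ _ := h2
    calc min ((ℓ:ℝ) * ε / 2) (1 / (2 * (ℓ:ℝ) ^ 2)) * 2 ^ (m * n)
        ≤ (1 / (2 * (ℓ:ℝ) ^ 2)) * 2 ^ (m * n) :=
          mul_le_mul_of_nonneg_right (min_le_right _ _) (by positivity)
      _ ≤ (Stmt8.rhoCnt X f : ℝ) := by
          rw [div_mul_eq_mul_div, one_mul, div_le_iff₀ (by positivity)]
          linarith
  · push_neg at hcase
    -- the corrected function is a polynomial
    have hC := Stmt8.claimC X f hnonzero hrows hℓ hcase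
    have hgP : Stmt8.gfun X f ∈ PolyDeg n d := by
      by_contra hng
      obtain ⟨M, hM⟩ := hsound _ hng
      rw [hC M] at hM
      exact absurd hM (by decide)
    set b : ℕ := (univ.filter fun v : Fin n → ZMod 2 => Stmt8.gfun X f v ≠ f v).card
      with hbdef
    have hfarb : ε * 2 ^ n ≤ (b : ℝ) := by
      have h := hfar _ hgP
      have hsame : (Finset.univ.filter fun x => f x ≠ Stmt8.gfun X f x).card = b := by
        rw [hbdef]
        congr 1
        apply Finset.filter_congr
        intro v _
        exact ne_comm
      rw [hsame] at h
      exact h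
    have hclaimB : b * (2 ^ n) ^ m ≤ 2 * Stmt8.rhoCnt X f * 2 ^ n :=
      Stmt8.claimB X f hnonzero
    -- counting facts
    have hF1 : ∀ i : Fin ℓ,
        (univ.filter fun M : Matrix (Fin m) (Fin n) (ZMod 2) =>
          Stmt8.gfun X f (Stmt8.vm (X i) M) ≠ f (Stmt8.vm (X i) M)).card * 2 ^ n
        = b * (2 ^ n) ^ m := by
      intro i
      have h1 := Stmt8.count_surj (Stmt8.vmHom (n := n) (X i))
        (Stmt8.vmHom_surj _ (hnonzero i)) (fun v => Stmt8.gfun X f v ≠ f v)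
      simp only [Stmt8.vmHom_apply] at h1
      have h2 := Stmt8.card_total (Stmt8.vmHom (n := n) (X i))
        (Stmt8.vmHom_surj _ (hnonzero i))
      rw [Stmt8.card_Mat, Stmt8.card_V] at h2
      erw [h1]; rw [← hbdef]
      calc b * (univ.filter fun M : Matrix (Fin m) (Fin n) (ZMod 2) =>
            Stmt8.vmHom (X i) M = 0).card * 2 ^ n
          = b * (2 ^ n * (univ.filter fun M : Matrix (Fin m) (Fin n) (ZMod 2) =>
            Stmt8.vmHom (X i) M = 0).card) := by ring
        _ = b * (2 ^ n) ^ m := by rw [← h2]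
    have hF2 : ∀ i j : Fin ℓ, i ≠ j →
        (univ.filter fun M : Matrix (Fin m) (Fin n) (ZMod 2) =>
          (Stmt8.gfun X f (Stmt8.vm (X i) M) ≠ f (Stmt8.vm (X i) M))
            ∧ (Stmt8.gfun X f (Stmt8.vm (X j) M) ≠ f (Stmt8.vm (X j) M))).card
          * (2 ^ n * 2 ^ n)
        = b * b * (2 ^ n) ^ m := by
      intro i j hij
      have hs := Stmt8.pairHom_surj (n := n) (X i) (X j) (hnonzero i) (hnonzero j)
        (fun h => hij (hrows h))
      have h1 := Stmt8.count_surj (Stmt8.pairHom (n := n) (X i) (X j)) hs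
        (fun p => (Stmt8.gfun X f p.1 ≠ f p.1) ∧ (Stmt8.gfun X f p.2 ≠ f p.2))
      simp only [Stmt8.pairHom_apply] at h1
      have h2 := Stmt8.card_total (Stmt8.pairHom (n := n) (X i) (X j)) hs
      rw [Stmt8.card_Mat, Fintype.card_prod, Stmt8.card_V] at h2
      erw [h1]; rw [Stmt8.card_filter_prod (fun v => Stmt8.gfun X f v ≠ f v)
        (fun v => Stmt8.gfun X f v ≠ f v), ← hbdef]
      calc b * b * (univ.filter fun M : Matrix (Fin m) (Fin n) (ZMod 2) =>
            Stmt8.pairHom (X i) (X j) M = 0).card * (2 ^ n * 2 ^ n)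
          = b * b * (2 ^ n * 2 ^ n * (univ.filter
              fun M : Matrix (Fin m) (Fin n) (ZMod 2) =>
            Stmt8.pairHom (X i) (X j) M = 0).card) := by ring
        _ = b * b * (2 ^ n) ^ m := by rw [← h2]
    -- exactly-one sets
    set A : Fin ℓ → Finset (Matrix (Fin m) (Fin n) (ZMod 2)) := fun i =>
      univ.filter fun M =>
        (Stmt8.gfun X f (Stmt8.vm (X i) M) ≠ f (Stmt8.vm (X i) M))
          ∧ ∀ j, j ≠ i → Stmt8.gfun X f (Stmt8.vm (X j) M) = f (Stmt8.vm (X j) M)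
      with hAdef
    have hN3 : ∀ i : Fin ℓ,
        (univ.filter fun M : Matrix (Fin m) (Fin n) (ZMod 2) =>
          Stmt8.gfun X f (Stmt8.vm (X i) M) ≠ f (Stmt8.vm (X i) M)).card
        ≤ (A i).card + ∑ j ∈ univ.erase i,
          (univ.filter fun M : Matrix (Fin m) (Fin n) (ZMod 2) =>
            (Stmt8.gfun X f (Stmt8.vm (X i) M) ≠ f (Stmt8.vm (X i) M))
              ∧ (Stmt8.gfun X f (Stmt8.vm (X j) M) ≠ f (Stmt8.vm (X j) M))).card := by
      intro i
      have hsub : (univ.filter fun M : Matrix (Fin m) (Fin n) (ZMod 2) =>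
          Stmt8.gfun X f (Stmt8.vm (X i) M) ≠ f (Stmt8.vm (X i) M))
          ⊆ A i ∪ (univ.erase i).biUnion (fun j =>
            univ.filter fun M : Matrix (Fin m) (Fin n) (ZMod 2) =>
            (Stmt8.gfun X f (Stmt8.vm (X i) M) ≠ f (Stmt8.vm (X i) M))
              ∧ (Stmt8.gfun X f (Stmt8.vm (X j) M) ≠ f (Stmt8.vm (X j) M))) := by
        intro M hM
        rw [mem_filter] at hM
        by_cases hall : ∀ j, j ≠ i → Stmt8.gfun X f (Stmt8.vm (X j) M)
            = f (Stmt8.vm (X j) M)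
        · exact Finset.mem_union_left _ (mem_filter.mpr ⟨mem_univ M, hM.2, hall⟩)
        · push_neg at hall
          obtain ⟨j, hji, hjbad⟩ := hall
          exact Finset.mem_union_right _ (Finset.mem_biUnion.mpr ⟨j,
            Finset.mem_erase.mpr ⟨hji, mem_univ j⟩,
            mem_filter.mpr ⟨mem_univ M, hM.2, hjbad⟩⟩)
      refine (Finset.card_le_card hsub).trans ?_
      refine (Finset.card_union_le _ _).trans ?_
      exact Nat.add_le_add_left Finset.card_biUnion_le _
    have hN4 : ∑ i : Fin ℓ, (A i).card ≤ Stmt8.rhoCnt X f := by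
      have hdisj : (↑(univ : Finset (Fin ℓ)) : Set (Fin ℓ)).PairwiseDisjoint A := by
        intro i _ j _ hij
        rw [Function.onFun, Finset.disjoint_left]
        intro M hMi hMj
        rw [hAdef] at hMi hMj
        rw [mem_filter] at hMi hMj
        exact hMi.2.1 (hMj.2.2 i hij)
      rw [← Finset.card_biUnion hdisj]
      apply Finset.card_le_card
      intro M hM
      rw [Finset.mem_biUnion] at hM
      obtain ⟨i, _, hMi⟩ := hM
      rw [hAdef, mem_filter] at hMi
      obtain ⟨-, hbadi, hrest⟩ := hMi
      rw [mem_filter]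
      refine ⟨mem_univ M, ?_⟩
      have hdecomp : patternSum X f M = patternSum X (Stmt8.gfun X f) M
          + ∑ k, (Stmt8.gfun X f (Stmt8.vm (X k) M) + f (Stmt8.vm (X k) M)) := by
        rw [Stmt8.patternSum_eq, Stmt8.patternSum_eq, ← Finset.sum_add_distrib]
        refine Finset.sum_congr rfl fun k _ => ?_
        rw [← add_assoc, Stmt8.z2addself, zero_add]
      rw [hdecomp, hcomplete _ hgP M, zero_add]
      rw [Finset.sum_eq_single_of_mem i (mem_univ i)]
      · exact Stmt8.z2ne1 _ _ hbadi
      · intro k _ hk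
        rw [hrest k hk, Stmt8.z2addself]
    -- combine in ℕ
    have hN5 : ℓ * (b * (2 ^ n) ^ m * 2 ^ n)
        ≤ Stmt8.rhoCnt X f * (2 ^ n * 2 ^ n)
          + ℓ * ((ℓ - 1) * (b * b * (2 ^ n) ^ m)) := by
      have hper : ∀ i : Fin ℓ, b * (2 ^ n) ^ m * 2 ^ n
          ≤ (A i).card * (2 ^ n * 2 ^ n) + (ℓ - 1) * (b * b * (2 ^ n) ^ m) := by
        intro i
        have h := Nat.mul_le_mul_right (2 ^ n * 2 ^ n) (hN3 i)
        calc b * (2 ^ n) ^ m * 2 ^ n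
            = (univ.filter fun M : Matrix (Fin m) (Fin n) (ZMod 2) =>
                Stmt8.gfun X f (Stmt8.vm (X i) M) ≠ f (Stmt8.vm (X i) M)).card
                * (2 ^ n * 2 ^ n) := by
              rw [← mul_assoc, hF1 i]
          _ ≤ ((A i).card + ∑ j ∈ univ.erase i,
                (univ.filter fun M : Matrix (Fin m) (Fin n) (ZMod 2) =>
                  (Stmt8.gfun X f (Stmt8.vm (X i) M) ≠ f (Stmt8.vm (X i) M))
                    ∧ (Stmt8.gfun X f (Stmt8.vm (X j) M) ≠ f (Stmt8.vm (X j) M))).card)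
                * (2 ^ n * 2 ^ n) := h
          _ = (A i).card * (2 ^ n * 2 ^ n) + ∑ j ∈ univ.erase i,
                ((univ.filter fun M : Matrix (Fin m) (Fin n) (ZMod 2) =>
                  (Stmt8.gfun X f (Stmt8.vm (X i) M) ≠ f (Stmt8.vm (X i) M))
                    ∧ (Stmt8.gfun X f (Stmt8.vm (X j) M) ≠ f (Stmt8.vm (X j) M))).card
                  * (2 ^ n * 2 ^ n)) := by
              rw [Nat.add_mul, Finset.sum_mul]
          _ = (A i).card * (2 ^ n * 2 ^ n) + (ℓ - 1) * (b * b * (2 ^ n) ^ m) := by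
              congr 1
              rw [Finset.sum_congr rfl (fun j hj =>
                  hF2 i j (fun h => (Finset.mem_erase.mp hj).1 h.symm)),
                Finset.sum_const, smul_eq_mul, Finset.card_erase_of_mem (mem_univ _),
                Finset.card_univ, Fintype.card_fin]
      calc ℓ * (b * (2 ^ n) ^ m * 2 ^ n)
          = ∑ _i : Fin ℓ, b * (2 ^ n) ^ m * 2 ^ n := by
            rw [Finset.sum_const, Finset.card_univ, Fintype.card_fin, smul_eq_mul]
        _ ≤ ∑ i : Fin ℓ, ((A i).card * (2 ^ n * 2 ^ n)
              + (ℓ - 1) * (b * b * (2 ^ n) ^ m)) := Finset.sum_le_sum fun i _ => hper i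
        _ = (∑ i : Fin ℓ, (A i).card) * (2 ^ n * 2 ^ n)
              + ℓ * ((ℓ - 1) * (b * b * (2 ^ n) ^ m)) := by
            rw [Finset.sum_add_distrib, Finset.sum_const, Finset.card_univ,
              Fintype.card_fin, smul_eq_mul, Finset.sum_mul]
        _ ≤ Stmt8.rhoCnt X f * (2 ^ n * 2 ^ n)
              + ℓ * ((ℓ - 1) * (b * b * (2 ^ n) ^ m)) :=
            Nat.add_le_add_right (Nat.mul_le_mul_right _ hN4) _
    -- pass to the reals
    set P : ℝ := (Stmt8.rhoCnt X f : ℝ) with hPdef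
    set B : ℝ := (b : ℝ) with hBdef
    set Q : ℝ := (2 : ℝ) ^ n with hQdef
    set D : ℝ := ((2 : ℝ) ^ n) ^ m with hDdef
    have hQpos : (0:ℝ) < Q := by rw [hQdef]; positivity
    have hDpos : (0:ℝ) < D := by rw [hDdef]; positivity
    have hPnn : (0:ℝ) ≤ P := by rw [hPdef]; positivity
    have hBnn : (0:ℝ) ≤ B := by rw [hBdef]; positivity
    have hsub1 : ((ℓ - 1 : ℕ) : ℝ) = (ℓ:ℝ) - 1 := by
      rw [Nat.cast_sub (by omega)]
      norm_num
    have k1 : ε * Q ≤ B := hfarb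
    have k2 : B * D ≤ 2 * P * Q := by
      have := Nat.cast_le (α := ℝ) |>.mpr hclaimB
      push_cast at this
      rw [hBdef, hPdef, hQdef, hDdef]
      convert this using 1 <;> ring
    have k3 : 2 * (ℓ:ℝ) ^ 2 * P < D := by
      have := Nat.cast_lt (α := ℝ) |>.mpr hcase
      push_cast at this
      rw [hPdef, hDdef]
      convert this using 1 <;> ring
    have k4 : (ℓ:ℝ) * (B * D * Q)
        ≤ P * (Q * Q) + (ℓ:ℝ) * (((ℓ:ℝ) - 1) * (B * B * D)) := by
      have := Nat.cast_le (α := ℝ) |>.mpr hN5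
      push_cast [hsub1] at this
      rw [hPdef, hBdef, hQdef, hDdef]
      convert this using 2 <;> push_cast <;> ring
    have hDD : (2:ℝ) ^ (m * n) = D := by rw [hDdef, ← pow_mul, Nat.mul_comm]
    have hfinal : (ℓ:ℝ) * ε / 2 * D ≤ P :=
      realArith (ℓ:ℝ) ε B P Q D hlR hε hQpos hDpos hPnn hBnn k1 k2 k3 k4
    calc min ((ℓ:ℝ) * ε / 2) (1 / (2 * (ℓ:ℝ) ^ 2)) * 2 ^ (m * n)
        ≤ ((ℓ:ℝ) * ε / 2) * 2 ^ (m * n) :=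
          mul_le_mul_of_nonneg_right (min_le_left _ _) (by positivity)
      _ = ((ℓ:ℝ) * ε / 2) * D := by rw [hDD]
      _ ≤ P := hfinal
end

section
/- Let d ≥ 1 and n ≥ 1 be integers, and let X ∈ F_2^{ℓ×m} be a testing pattern whose rows are pairwise distinct and nonzero and which is complete for P_d (for functions on F_2^n). Let f : F_2^n → F_2 and let ε = dist(f, P_d) be the exact relative distance from f to P_d. Then the number of matrices M ∈ F_2^{m×n} with T_{X,f}(M) = 1 is at least ℓ·ε·(1 − ℓ·ε) · 2^{mn}. Equivalently, for uniformly random M, the probability that T_{X,f}(M) = 1 is at least ℓε(1 − ℓε). -/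
open Finset

section AUX

lemma zmod2_cases (a : ZMod 2) : a = 0 ∨ a = 1 := by revert a; decide

lemma zmod2_sum_eq_card {ι : Type*} [Fintype ι] (v : ι → ZMod 2) :
    ∑ i, v i = ((univ.filter (fun i => v i = 1)).card : ZMod 2) := by
  rw [← Finset.sum_filter_add_sum_filter_not univ (fun i => v i = 1)]
  have h0 : ∑ i ∈ univ.filter (fun i => ¬ v i = 1), v i = 0 := by
    apply Finset.sum_eq_zero; intro i hi
    have h := (mem_filter.1 hi).2
    rcases zmod2_cases (v i) with h'|h' <;> tauto
  rw [h0, add_zero, Finset.sum_congr rfl (fun i hi => (mem_filter.1 hi).2),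
    Finset.sum_const, nsmul_eq_mul, mul_one]

lemma natCast_zmod2_eq_one_iff (k : ℕ) : ((k : ZMod 2) = 1) ↔ k % 2 = 1 := by
  rw [← ZMod.natCast_mod k 2]
  rcases Nat.mod_two_eq_zero_or_one k with h | h <;> rw [h] <;> simp

lemma fiber_card {V W : Type*} [AddCommGroup V] [AddCommGroup W] [Fintype V] [Fintype W]
    [DecidableEq W] (φ : V →+ W) (hφ : Function.Surjective φ) (y : W) :
    (univ.filter (fun v => φ v = y)).card * Fintype.card W = Fintype.card V := by
  have key : ∀ z : W, (univ.filter (fun v => φ v = z)).card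
      = (univ.filter (fun v => φ v = y)).card := by
    intro z
    obtain ⟨v0, hv0⟩ := hφ (y - z)
    apply Finset.card_bij' (fun v _ => v + v0) (fun v _ => v - v0)
    · intro a ha
      simp only [mem_filter, mem_univ, true_and] at ha ⊢
      rw [map_add, ha, hv0]; abel
    · intro a ha
      simp only [mem_filter, mem_univ, true_and] at ha ⊢
      rw [map_sub, ha, hv0]; abel
    · intro a _; abel
    · intro a _; abel
  have h := Finset.card_eq_sum_card_fiberwise
    (s := (univ : Finset V)) (t := (univ : Finset W)) (f := fun v => φ v)
    (fun x _ => mem_univ _)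
  rw [Finset.card_univ] at h
  rw [h, Finset.sum_congr rfl (fun z _ => key z), Finset.sum_const, Finset.card_univ,
    smul_eq_mul, mul_comm]

lemma count_filter_pre {V W : Type*} [AddCommGroup V] [AddCommGroup W] [Fintype V] [Fintype W]
    [DecidableEq W] (φ : V →+ W) (hφ : Function.Surjective φ) (T : Finset W) :
    (univ.filter (fun v => φ v ∈ T)).card * Fintype.card W = T.card * Fintype.card V := by
  have h := Finset.card_eq_sum_card_fiberwise
    (s := univ.filter (fun v => φ v ∈ T)) (t := T) (f := fun v => φ v)
    (fun x hx => (mem_filter.1 hx).2)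
  rw [h, Finset.sum_mul]
  rw [Finset.sum_congr rfl (fun z hz => ?_), Finset.sum_const, smul_eq_mul]
  rw [Finset.filter_filter]
  rw [show (univ.filter fun v => φ v ∈ T ∧ φ v = z) = univ.filter (fun v => φ v = z) from
    Finset.filter_congr (fun v _ => by constructor <;> intro h' <;> [exact h'.2; exact ⟨h' ▸ hz, h'⟩])]
  exact fiber_card φ hφ z


def vecMulHom {m n : ℕ} (v : Fin m → ZMod 2) :
    Matrix (Fin m) (Fin n) (ZMod 2) →+ (Fin n → ZMod 2) where
  toFun M := Matrix.vecMul v M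
  map_zero' := by simp
  map_add' := by intro A B; simp [Matrix.vecMul_add]

def pairHom {m n : ℕ} (v w : Fin m → ZMod 2) :
    Matrix (Fin m) (Fin n) (ZMod 2) →+ ((Fin n → ZMod 2) × (Fin n → ZMod 2)) where
  toFun M := (Matrix.vecMul v M, Matrix.vecMul w M)
  map_zero' := by simp
  map_add' := by intro A B; simp [Matrix.vecMul_add]

lemma exists_one {m : ℕ} {v : Fin m → ZMod 2} (hv : v ≠ 0) : ∃ k, v k = 1 := by
  by_contra h
  push_neg at h
  exact hv (funext fun k => by rcases zmod2_cases (v k) with h'|h'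
                               · exact h'
                               · exact absurd h' (h k))

lemma vecMulHom_surj {m n : ℕ} (v : Fin m → ZMod 2) (hv : v ≠ 0) :
    Function.Surjective (vecMulHom (n := n) v) := by
  obtain ⟨k, hk⟩ := exists_one hv
  intro y
  refine ⟨Matrix.of (fun k' j => if k' = k then y j else 0), funext fun j => ?_⟩
  show (Matrix.vecMul v _) j = y j
  simp only [Matrix.vecMul, dotProduct, Matrix.of_apply]
  rw [Finset.sum_eq_single k]
  · simp [hk]
  · intro b _ hb; simp [hb]
  · intro h; exact absurd (mem_univ k) h

lemma pairHom_surj_aux {m n : ℕ} (v w : Fin m → ZMod 2) (k : Fin m)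
    (hvk : v k = 1) (hwk : w k = 0) (hw : w ≠ 0) :
    Function.Surjective (pairHom (n := n) v w) := by
  obtain ⟨k', hk'⟩ := exists_one hw
  have hkk' : k' ≠ k := fun h => by rw [h, hwk] at hk'; exact (zero_ne_one (α := ZMod 2)) hk'
  rintro ⟨y, z⟩
  refine ⟨Matrix.of (fun a j => if a = k then y j - v k' * z j else
      if a = k' then z j else 0), ?_⟩
  have hsum : ∀ (u : Fin m → ZMod 2) (j : Fin n),
      (Matrix.vecMul u (Matrix.of (fun a j => if a = k then y j - v k' * z j else
        if a = k' then z j else 0))) j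
      = u k * (y j - v k' * z j) + u k' * z j := by
    intro u j
    simp only [Matrix.vecMul, dotProduct, Matrix.of_apply]
    rw [← Finset.sum_subset (Finset.subset_univ ({k, k'} : Finset (Fin m)))]
    · rw [Finset.sum_pair (Ne.symm hkk')]
      simp [hkk', Ne.symm hkk']
    · intro b _ hb
      simp only [Finset.mem_insert, Finset.mem_singleton] at hb
      push_neg at hb
      simp [hb.1, hb.2]
  have h1 : ∀ j, v k * (y j - v k' * z j) + v k' * z j = y j := by
    intro j; rw [hvk]; ring
  have h2 : ∀ j, w k * (y j - v k' * z j) + w k' * z j = z j := by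
    intro j; rw [hwk, hk']; ring
  exact Prod.ext (funext fun j => (hsum v j).trans (h1 j))
    (funext fun j => (hsum w j).trans (h2 j))

lemma pairHom_surj {m n : ℕ} (v w : Fin m → ZMod 2) (hv : v ≠ 0) (hw : w ≠ 0) (hvw : v ≠ w) :
    Function.Surjective (pairHom (n := n) v w) := by
  have hne : ∃ k, v k ≠ w k := by
    by_contra h; push_neg at h; exact hvw (funext h)
  obtain ⟨k, hk⟩ := hne
  rcases zmod2_cases (v k) with h1 | h1 <;> rcases zmod2_cases (w k) with h2 | h2
  · exact absurd (h1.trans h2.symm) hk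
  · -- v k = 0, w k = 1 : use aux with w v and swap
    have hs := pairHom_surj_aux w v k h2 h1 hv (n := n)
    rintro ⟨y, z⟩
    obtain ⟨M, hM⟩ := hs ⟨z, y⟩
    refine ⟨M, ?_⟩
    have h1' := congrArg Prod.fst hM
    have h2' := congrArg Prod.snd hM
    simp only [pairHom] at h1' h2' ⊢
    exact Prod.ext h2' h1'
  · exact pairHom_surj_aux v w k h1 h2 hw
  · exact absurd (h1.trans h2.symm) hk

lemma card_matrix (m n : ℕ) :
    Fintype.card (Matrix (Fin m) (Fin n) (ZMod 2)) = 2 ^ (m * n) := by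
  rw [show Fintype.card (Matrix (Fin m) (Fin n) (ZMod 2))
      = Fintype.card (Fin m → Fin n → ZMod 2) from rfl]
  simp [Fintype.card_fun, ← pow_mul, Nat.mul_comm]

lemma card_vec (n : ℕ) : Fintype.card (Fin n → ZMod 2) = 2 ^ n := by
  simp [Fintype.card_fun]

lemma point_bound (k : ℕ) : 2*(k:ℝ) - (k:ℝ)^2 ≤ if k % 2 = 1 then (1:ℝ) else 0 := by
  rcases k with _|_|k
  · norm_num
  · norm_num
  · have hk : (0:ℝ) ≤ (k:ℝ) := Nat.cast_nonneg k
    split_ifs <;> push_cast <;> nlinarith [sq_nonneg ((k:ℝ))]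

lemma zmod2_add_eq_one_iff (a b : ZMod 2) : (a + b = 1) ↔ a ≠ b := by revert a b; decide

end AUX

theorem stmt_9 (d n ℓ m : ℕ) (hd : 1 ≤ d) (hn : 1 ≤ n) (hlm : m ≤ ℓ)
    (X : Matrix (Fin ℓ) (Fin m) (ZMod 2))
    (hrows : Function.Injective X) (hnonzero : ∀ i, X i ≠ 0) (hrank : X.rank = m)
    (hcomplete : IsCompletePattern n d X)
    (f : (Fin n → ZMod 2) → ZMod 2) (ε : ℝ)
    (hdist : IsLeast {r : ℝ | ∃ g ∈ PolyDeg n d,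
      r = ((Finset.univ.filter (fun x => f x ≠ g x)).card : ℝ) / 2 ^ n} ε) :
    ℓ * ε * (1 - ℓ * ε) * 2 ^ (m * n) ≤
      ((Finset.univ.filter (fun M : Matrix (Fin m) (Fin n) (ZMod 2) =>
        patternSum X f M = 1)).card : ℝ) := by
  classical
  obtain ⟨⟨g, hg, hεeq⟩, -⟩ := hdist
  set S : Finset (Fin n → ZMod 2) := univ.filter (fun x => f x ≠ g x) with hS
  have hXM : ∀ (M : Matrix (Fin m) (Fin n) (ZMod 2)) (i : Fin ℓ),
      (X * M) i = vecMulHom (n := n) (X i) M := by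
    intro M i; funext j
    simp [vecMulHom, Matrix.mul_apply, Matrix.vecMul, dotProduct]
  set N : Matrix (Fin m) (Fin n) (ZMod 2) → ℕ :=
    fun M => (univ.filter (fun i => (X * M) i ∈ S)).card with hNdef
  -- characterization of the test outcome
  have key : ∀ M : Matrix (Fin m) (Fin n) (ZMod 2),
      patternSum X f M = 1 ↔ N M % 2 = 1 := by
    intro M
    have h0 := hcomplete g hg M
    have h1 : patternSum X f M = ∑ i, (f ((X * M) i) + g ((X * M) i)) := by
      rw [Finset.sum_add_distrib]
      show patternSum X f M = patternSum X f M + patternSum X g M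
      rw [h0, add_zero]
    have h2 : (univ.filter (fun i => f ((X * M) i) + g ((X * M) i) = 1))
        = (univ.filter (fun i => (X * M) i ∈ S)) := by
      apply Finset.filter_congr
      intro i _
      rw [zmod2_add_eq_one_iff, hS, mem_filter]
      simp
    rw [h1, zmod2_sum_eq_card, h2, natCast_zmod2_eq_one_iff]
  -- counting lemmas (ℕ level)
  have cA : ∀ i : Fin ℓ,
      (univ.filter (fun M : Matrix (Fin m) (Fin n) (ZMod 2) => (X * M) i ∈ S)).card * 2 ^ n
        = S.card * 2 ^ (m * n) := by
    intro i
    have h := count_filter_pre (vecMulHom (n := n) (X i))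
      (vecMulHom_surj (X i) (hnonzero i)) S
    rw [card_vec, card_matrix] at h
    rw [show (univ.filter (fun M : Matrix (Fin m) (Fin n) (ZMod 2) => (X * M) i ∈ S))
        = univ.filter (fun M => vecMulHom (n := n) (X i) M ∈ S) from
      Finset.filter_congr (fun M _ => by rw [hXM])]
    exact h
  have cB : ∀ i j : Fin ℓ, i ≠ j →
      (univ.filter (fun M : Matrix (Fin m) (Fin n) (ZMod 2) =>
        (X * M) i ∈ S ∧ (X * M) j ∈ S)).card * (2 ^ n * 2 ^ n)
        = S.card * S.card * 2 ^ (m * n) := by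
    intro i j hij
    have hvw : X i ≠ X j := fun h => hij (hrows h)
    have h := count_filter_pre (pairHom (n := n) (X i) (X j))
      (pairHom_surj (X i) (X j) (hnonzero i) (hnonzero j) hvw) (S ×ˢ S)
    rw [Fintype.card_prod, card_vec, Finset.card_product, card_matrix] at h
    rw [show (univ.filter (fun M : Matrix (Fin m) (Fin n) (ZMod 2) =>
          (X * M) i ∈ S ∧ (X * M) j ∈ S))
        = univ.filter (fun M => pairHom (n := n) (X i) (X j) M ∈ S ×ˢ S) from
      Finset.filter_congr (fun M _ => by
        rw [Finset.mem_product, hXM M i, hXM M j]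
        exact Iff.rfl)]
    exact h
  -- real versions
  have h2n : (0:ℝ) < 2 ^ n := by positivity
  set a : ℝ := (S.card : ℝ) * 2 ^ (m * n) / 2 ^ n with ha
  set c : ℝ := (S.card : ℝ) * S.card * 2 ^ (m * n) / (2 ^ n * 2 ^ n) with hc
  have hc0 : 0 ≤ c := by rw [hc]; positivity
  have cA' : ∀ i : Fin ℓ,
      ((univ.filter (fun M : Matrix (Fin m) (Fin n) (ZMod 2) => (X * M) i ∈ S)).card : ℝ)
        = a := by
    intro i
    rw [ha, eq_div_iff (ne_of_gt h2n)]
    exact_mod_cast cA i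
  have cB' : ∀ i j : Fin ℓ, i ≠ j →
      ((univ.filter (fun M : Matrix (Fin m) (Fin n) (ZMod 2) =>
        (X * M) i ∈ S ∧ (X * M) j ∈ S)).card : ℝ) = c := by
    intro i j hij
    rw [hc, eq_div_iff (by positivity)]
    exact_mod_cast cB i j hij
  -- main bound
  have main : ∑ M : Matrix (Fin m) (Fin n) (ZMod 2), (2 * (N M : ℝ) - (N M : ℝ) ^ 2)
      ≤ ((univ.filter (fun M : Matrix (Fin m) (Fin n) (ZMod 2) =>
          patternSum X f M = 1)).card : ℝ) := by
    rw [show (univ.filter (fun M : Matrix (Fin m) (Fin n) (ZMod 2) => patternSum X f M = 1))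
        = univ.filter (fun M => N M % 2 = 1) from
      Finset.filter_congr (fun M _ => by rw [key M])]
    rw [Finset.card_filter]
    push_cast
    apply Finset.sum_le_sum
    intro M _
    exact point_bound (N M)
  have sumN : ∑ M : Matrix (Fin m) (Fin n) (ZMod 2), (N M : ℝ) = ℓ * a := by
    have h1 : ∀ M, (N M : ℝ) = ∑ i : Fin ℓ, (if (X * M) i ∈ S then (1:ℝ) else 0) := by
      intro M; rw [Finset.sum_boole]
    rw [Finset.sum_congr rfl (fun M _ => h1 M), Finset.sum_comm]
    rw [Finset.sum_congr rfl (fun i _ => by rw [Finset.sum_boole, cA' i])]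
    rw [Finset.sum_const, Finset.card_univ, Fintype.card_fin, nsmul_eq_mul]
  have sumN2 : ∑ M : Matrix (Fin m) (Fin n) (ZMod 2), (N M : ℝ) ^ 2
      ≤ ℓ * a + ℓ * ℓ * c := by
    have expand : ∀ M : Matrix (Fin m) (Fin n) (ZMod 2), (N M : ℝ) ^ 2
        = ∑ i : Fin ℓ, ∑ j : Fin ℓ,
          (if (X * M) i ∈ S ∧ (X * M) j ∈ S then (1:ℝ) else 0) := by
      intro M
      have hN : (N M : ℝ) = ∑ i : Fin ℓ, (if (X * M) i ∈ S then (1:ℝ) else 0) := by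
        rw [Finset.sum_boole]
      rw [hN, sq, Finset.sum_mul_sum]
      refine Finset.sum_congr rfl (fun i _ => Finset.sum_congr rfl (fun j _ => ?_))
      by_cases h1 : (X * M) i ∈ S <;> by_cases h2 : (X * M) j ∈ S <;> simp [h1, h2]
    rw [Finset.sum_congr rfl (fun M _ => expand M), Finset.sum_comm]
    have inner : ∀ i : Fin ℓ,
        ∑ M : Matrix (Fin m) (Fin n) (ZMod 2), ∑ j : Fin ℓ,
          (if (X * M) i ∈ S ∧ (X * M) j ∈ S then (1:ℝ) else 0) ≤ a + ℓ * c := by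
      intro i
      rw [Finset.sum_comm]
      have hdiag : ∑ M : Matrix (Fin m) (Fin n) (ZMod 2),
          (if (X * M) i ∈ S ∧ (X * M) i ∈ S then (1:ℝ) else 0) = a := by
        rw [Finset.sum_boole]
        rw [show (univ.filter (fun M : Matrix (Fin m) (Fin n) (ZMod 2) =>
              (X * M) i ∈ S ∧ (X * M) i ∈ S))
            = univ.filter (fun M => (X * M) i ∈ S) from
          Finset.filter_congr (fun M _ => by simp)]
        exact cA' i
      have hoff : ∀ j ∈ univ.erase i,
          ∑ M : Matrix (Fin m) (Fin n) (ZMod 2),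
            (if (X * M) i ∈ S ∧ (X * M) j ∈ S then (1:ℝ) else 0) = c := by
        intro j hj
        rw [Finset.sum_boole]
        exact cB' i j (Ne.symm (Finset.mem_erase.1 hj).1)
      rw [← Finset.add_sum_erase _ _ (mem_univ i), hdiag]
      have : ∑ j ∈ univ.erase i, ∑ M : Matrix (Fin m) (Fin n) (ZMod 2),
          (if (X * M) i ∈ S ∧ (X * M) j ∈ S then (1:ℝ) else 0)
          = (univ.erase i).card * c := by
        rw [Finset.sum_congr rfl hoff, Finset.sum_const, nsmul_eq_mul]
      rw [this]
      have hcard : ((univ.erase i).card : ℝ) ≤ ℓ := by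
        have := Finset.card_erase_le (s := (univ : Finset (Fin ℓ))) (a := i)
        have h2 : (univ : Finset (Fin ℓ)).card = ℓ := by
          rw [Finset.card_univ, Fintype.card_fin]
        calc ((univ.erase i).card : ℝ) ≤ ((univ : Finset (Fin ℓ)).card : ℝ) := by
              exact_mod_cast this
          _ = ℓ := by rw [h2]
      nlinarith
    calc ∑ i : Fin ℓ, ∑ M : Matrix (Fin m) (Fin n) (ZMod 2), ∑ j : Fin ℓ,
          (if (X * M) i ∈ S ∧ (X * M) j ∈ S then (1:ℝ) else 0)
        ≤ ∑ _i : Fin ℓ, (a + ℓ * c) := Finset.sum_le_sum (fun i _ => inner i)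
      _ = ℓ * a + ℓ * ℓ * c := by
          rw [Finset.sum_const, Finset.card_univ, Fintype.card_fin, nsmul_eq_mul]; ring
  -- put it together
  calc ℓ * ε * (1 - ℓ * ε) * 2 ^ (m * n) = ℓ * a - ℓ * ℓ * c := by
        rw [hεeq, ha, hc]; field_simp
    _ ≤ ∑ M : Matrix (Fin m) (Fin n) (ZMod 2), (2 * (N M : ℝ) - (N M : ℝ) ^ 2) := by
        rw [Finset.sum_sub_distrib, ← Finset.mul_sum, sumN]
        linarith [sumN2]
    _ ≤ _ := main
end
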